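/- arXiv:1605.03533 — 10 statements merged into one kernel-verified Lean document; each statement's English description precedes it below -/
import Mathlib

section
/- If G is a graph with m edges and exactly two distinct main eigenvalues λ₁ (the largest eigenvalue) and λᵢ, then λᵢ = (Σ_{v∈V(G)} d_v² − 2m·λ₁) / (2m − n·λ₁), where n is the order of G and d_v is the degree of vertex v. -/
open Matrix Finset Polynomial

variable {V : Type*} [Fintype V] [DecidableEq V]

/-- `μ` is an eigenvalue of the adjacency matrix of `G`. -/
def SimpleGraph.IsEigenvalue (G : SimpleGraph V) [DecidableRel G.Adj] (μ : ℝ) : Prop :=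
  ∃ x : V → ℝ, x ≠ 0 ∧ (G.adjMatrix ℝ) *ᵥ x = μ • x

/-- `μ` is a main eigenvalue: some associated eigenvector is not orthogonal
to the all-ones vector. -/
def SimpleGraph.IsMainEigenvalue (G : SimpleGraph V) [DecidableRel G.Adj] (μ : ℝ) : Prop :=
  ∃ x : V → ℝ, x ≠ 0 ∧ (G.adjMatrix ℝ) *ᵥ x = μ • x ∧ ∑ v, x v ≠ 0

/-- `μ` is a non-main eigenvalue: it is an eigenvalue whose eigenspace is
orthogonal to the all-ones vector. -/
def SimpleGraph.IsNonMainEigenvalue (G : SimpleGraph V) [DecidableRel G.Adj] (μ : ℝ) : Prop :=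
  G.IsEigenvalue μ ∧ ¬ G.IsMainEigenvalue μ

/-- The multiplicity of `μ` as an eigenvalue of `G` (as a root of the
characteristic polynomial of the adjacency matrix). -/
noncomputable def SimpleGraph.eigMult (G : SimpleGraph V) [DecidableRel G.Adj] (μ : ℝ) : ℕ :=
  ((G.adjMatrix ℝ).charpoly).rootMultiplicity μ

/-- `G` is harmonic: its degree vector is an eigenvector of the adjacency matrix
associated with a positive integer eigenvalue. -/
def SimpleGraph.IsHarmonic (G : SimpleGraph V) [DecidableRel G.Adj] : Prop :=
  ∃ ℓ : ℕ, 0 < ℓ ∧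
    (G.adjMatrix ℝ) *ᵥ (fun v => (G.degree v : ℝ)) = (ℓ : ℝ) • (fun v => (G.degree v : ℝ))



open RealInnerProductSpace in
private lemma edot {V : Type*} [Fintype V] [DecidableEq V] (x y : EuclideanSpace ℝ V) :
    ⟪x, y⟫ = x ⬝ᵥ y := by
  simp [PiLp.inner_apply, RCLike.inner_apply, dotProduct, mul_comm]

private lemma herm_dot {V : Type*} [Fintype V] [DecidableEq V] (A : Matrix V V ℝ)
    (hA : A.IsHermitian) (x y : V → ℝ) :
    (A *ᵥ x) ⬝ᵥ y = x ⬝ᵥ (A *ᵥ y) := by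
  have hT : Aᵀ = A := by
    ext i j
    simpa using congrFun (congrFun hA i) j
  rw [Matrix.dotProduct_mulVec, ← Matrix.vecMul_transpose, hT]

open RealInnerProductSpace in
private lemma parseval_dot {V : Type*} [Fintype V] [DecidableEq V] {A : Matrix V V ℝ}
    (hA : A.IsHermitian) (x y : V → ℝ) :
    ∑ k, ((hA.eigenvectorBasis k : V → ℝ) ⬝ᵥ x) * ((hA.eigenvectorBasis k : V → ℝ) ⬝ᵥ y)
      = x ⬝ᵥ y := by
  rw [← (edot (WithLp.toLp 2 x) (WithLp.toLp 2 y) : _ = x ⬝ᵥ y),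
    ← hA.eigenvectorBasis.sum_inner_mul_inner (WithLp.toLp 2 x) (WithLp.toLp 2 y)]
  refine Finset.sum_congr rfl fun k _ => ?_
  rw [real_inner_comm (hA.eigenvectorBasis k) (WithLp.toLp 2 x), edot, edot]

private lemma bk_dot_AJ {V : Type*} [Fintype V] [DecidableEq V] {A : Matrix V V ℝ}
    (hA : A.IsHermitian) (J : V → ℝ) (k : V) :
    (hA.eigenvectorBasis k : V → ℝ) ⬝ᵥ (A *ᵥ J)
      = hA.eigenvalues k * ((hA.eigenvectorBasis k : V → ℝ) ⬝ᵥ J) := by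
  have h' : A *ᵥ (hA.eigenvectorBasis k : V → ℝ)
      = hA.eigenvalues k • (hA.eigenvectorBasis k : V → ℝ) := hA.mulVec_eigenvectorBasis k
  rw [← herm_dot A hA, h', smul_dotProduct, smul_eq_mul]

private lemma spec_quadratic {V : Type*} [Fintype V] [DecidableEq V]
    (A : Matrix V V ℝ) (hA : A.IsHermitian) (J : V → ℝ) (r s : ℝ)
    (h : ∀ (μ : ℝ) (x : V → ℝ), x ≠ 0 → A *ᵥ x = μ • x → x ⬝ᵥ J ≠ 0 → μ = r ∨ μ = s) :
    (A *ᵥ J) ⬝ᵥ (A *ᵥ J) - (r + s) * (J ⬝ᵥ (A *ᵥ J)) + r * s * (J ⬝ᵥ J) = 0 := by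
  have h0 : ∀ k, ((hA.eigenvectorBasis k : V → ℝ) ⬝ᵥ (A *ᵥ J))
        * ((hA.eigenvectorBasis k : V → ℝ) ⬝ᵥ (A *ᵥ J))
      - (r + s) * (((hA.eigenvectorBasis k : V → ℝ) ⬝ᵥ (A *ᵥ J))
        * ((hA.eigenvectorBasis k : V → ℝ) ⬝ᵥ J))
      + r * s * (((hA.eigenvectorBasis k : V → ℝ) ⬝ᵥ J)
        * ((hA.eigenvectorBasis k : V → ℝ) ⬝ᵥ J)) = 0 := by
    intro k
    rw [bk_dot_AJ hA J k]
    by_cases hck : (hA.eigenvectorBasis k : V → ℝ) ⬝ᵥ J = 0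
    · rw [hck]; ring
    · rcases h (hA.eigenvalues k) (hA.eigenvectorBasis k)
        (by simpa using hA.eigenvectorBasis.orthonormal.ne_zero k) (hA.mulVec_eigenvectorBasis k) hck
        with h' | h' <;> rw [h'] <;> ring
  have main := Finset.sum_eq_zero (fun k (_ : k ∈ Finset.univ) => h0 k)
  rw [Finset.sum_add_distrib, Finset.sum_sub_distrib, ← Finset.mul_sum, ← Finset.mul_sum,
    parseval_dot hA (A *ᵥ J) (A *ᵥ J), parseval_dot hA (A *ᵥ J) J,
    parseval_dot hA J J] at main
  rw [dotProduct_comm (A *ᵥ J) J] at main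
  exact main

open RealInnerProductSpace in
private lemma spec_eigen {V : Type*} [Fintype V] [DecidableEq V]
    (A : Matrix V V ℝ) (hA : A.IsHermitian) (J : EuclideanSpace ℝ V) (r : ℝ)
    (hmax : ∀ (μ : ℝ) (x : V → ℝ), x ≠ 0 → A *ᵥ x = μ • x → μ ≤ r)
    (heq : J ⬝ᵥ (A *ᵥ J) = r * (J ⬝ᵥ J)) :
    A *ᵥ J = r • (J : V → ℝ) := by
  have hksum : ∑ k, (r - hA.eigenvalues k) * (((hA.eigenvectorBasis k : V → ℝ) ⬝ᵥ J)
      * ((hA.eigenvectorBasis k : V → ℝ) ⬝ᵥ J)) = 0 := by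
    have expand : ∀ k : V, (r - hA.eigenvalues k) * (((hA.eigenvectorBasis k : V → ℝ) ⬝ᵥ J)
        * ((hA.eigenvectorBasis k : V → ℝ) ⬝ᵥ J))
        = r * (((hA.eigenvectorBasis k : V → ℝ) ⬝ᵥ J) * ((hA.eigenvectorBasis k : V → ℝ) ⬝ᵥ J))
          - ((hA.eigenvectorBasis k : V → ℝ) ⬝ᵥ J) * ((hA.eigenvectorBasis k : V → ℝ) ⬝ᵥ (A *ᵥ J)) := by
      intro k
      rw [bk_dot_AJ hA J k]; ring
    rw [Finset.sum_congr rfl fun k _ => expand k, Finset.sum_sub_distrib, ← Finset.mul_sum,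
      parseval_dot hA J J, parseval_dot hA J (A *ᵥ J)]
    rw [heq]; ring
  have hterm := (Finset.sum_eq_zero_iff_of_nonneg (fun k _ =>
    mul_nonneg (sub_nonneg.2 (hmax (hA.eigenvalues k) (hA.eigenvectorBasis k)
      (by simpa using hA.eigenvectorBasis.orthonormal.ne_zero k) (hA.mulVec_eigenvectorBasis k)))
      (mul_self_nonneg _))).1 hksum
  have hnull : ∀ k, ⟪(WithLp.equiv 2 (V → ℝ)).symm (A *ᵥ J) - r • J,
      hA.eigenvectorBasis k⟫ = 0 := by
    intro k
    rw [inner_sub_left, real_inner_smul_left]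
    have h1 : ⟪(WithLp.equiv 2 (V → ℝ)).symm (A *ᵥ J), hA.eigenvectorBasis k⟫
        = hA.eigenvalues k * ((hA.eigenvectorBasis k : V → ℝ) ⬝ᵥ J) := by
      rw [edot, dotProduct_comm]
      exact bk_dot_AJ hA J k
    have h2 : ⟪J, hA.eigenvectorBasis k⟫ = (hA.eigenvectorBasis k : V → ℝ) ⬝ᵥ J := by
      rw [edot, dotProduct_comm]
    rw [h1, h2]
    rcases mul_eq_zero.1 (hterm k (Finset.mem_univ k)) with h' | h'
    · have hr : hA.eigenvalues k = r := by linarith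
      rw [hr]; ring
    · rw [mul_self_eq_zero.1 h']; ring
  have hzero : (WithLp.equiv 2 (V → ℝ)).symm (A *ᵥ J) - r • J = 0 := by
    rw [← @inner_self_eq_zero ℝ, ← hA.eigenvectorBasis.sum_inner_mul_inner]
    exact Finset.sum_eq_zero fun k _ => by rw [hnull k, zero_mul]
  exact sub_eq_zero.mp (by simpa using congrArg WithLp.ofLp hzero)


theorem two_main_eigenvalue_relation (G : SimpleGraph V) [DecidableRel G.Adj]
    (n m : ℕ) (hn : Fintype.card V = n) (hm : G.edgeFinset.card = m)
    (lam1 lami : ℝ)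
    (h1 : IsGreatest {μ | G.IsEigenvalue μ} lam1)
    (hmain1 : G.IsMainEigenvalue lam1) (hmaini : G.IsMainEigenvalue lami)
    (hne : lam1 ≠ lami)
    (honly : ∀ μ, G.IsMainEigenvalue μ → μ = lam1 ∨ μ = lami) :
    lami = ((∑ v, (G.degree v : ℝ) ^ 2) - 2 * m * lam1) / (2 * m - n * lam1) := by
  classical
  obtain ⟨xi, hxine, hxieig, hxisum⟩ := hmaini
  have hA : (G.adjMatrix ℝ).IsHermitian := by
    ext i j
    simp [Matrix.conjTranspose_apply, SimpleGraph.adj_comm]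
  have hd1 : G.adjMatrix ℝ *ᵥ (fun _ => (1 : ℝ)) = fun v => (G.degree v : ℝ) := by
    funext v
    simp only [SimpleGraph.adjMatrix_mulVec_apply, Finset.sum_const, nsmul_eq_mul, mul_one,
      SimpleGraph.card_neighborFinset_eq_degree]
  have hJJ : ((fun _ => (1 : ℝ)) : V → ℝ) ⬝ᵥ (fun _ => (1 : ℝ)) = (n : ℝ) := by
    simp only [dotProduct, mul_one, Finset.sum_const, Finset.card_univ, nsmul_eq_mul,
      hn]
  have hJAJ : (fun _ => (1 : ℝ)) ⬝ᵥ (G.adjMatrix ℝ *ᵥ fun _ => (1 : ℝ)) = 2 * (m : ℝ) := by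
    rw [hd1]
    have hsd : (∑ v, G.degree v) = 2 * m := by
      rw [G.sum_degrees_eq_twice_card_edges, hm]
    simp only [dotProduct, one_mul]
    exact_mod_cast congrArg (Nat.cast : ℕ → ℝ) hsd
  have hAJAJ : (G.adjMatrix ℝ *ᵥ fun _ => (1 : ℝ)) ⬝ᵥ (G.adjMatrix ℝ *ᵥ fun _ => (1 : ℝ))
      = ∑ v, (G.degree v : ℝ) ^ 2 := by
    rw [hd1]
    simp [dotProduct, sq]
  have hquad := spec_quadratic (G.adjMatrix ℝ) hA (fun _ => (1 : ℝ)) lam1 lami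
    (fun μ x hx he hd => honly μ ⟨x, hx, he, by simpa [dotProduct] using hd⟩)
  rw [hAJAJ, hJAJ, hJJ] at hquad
  by_cases hden : (2 * (m : ℝ) - n * lam1) = 0
  · have hAJ : G.adjMatrix ℝ *ᵥ (fun _ => (1 : ℝ)) = lam1 • (fun _ => (1 : ℝ)) := spec_eigen (G.adjMatrix ℝ) hA (WithLp.toLp 2 (fun _ => (1 : ℝ))) lam1
      (fun μ x hx he => h1.2 ⟨x, hx, he⟩)
      (by simp only [WithLp.ofLp_toLp]; rw [hJAJ, hJJ]; linarith)
    have e1 : (G.adjMatrix ℝ *ᵥ xi) ⬝ᵥ (fun _ => (1 : ℝ)) = lami * (xi ⬝ᵥ fun _ => (1 : ℝ)) := by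
      rw [hxieig, smul_dotProduct, smul_eq_mul]
    have e2 : (G.adjMatrix ℝ *ᵥ xi) ⬝ᵥ (fun _ => (1 : ℝ)) = lam1 * (xi ⬝ᵥ fun _ => (1 : ℝ)) := by
      rw [herm_dot _ hA, hAJ, dotProduct_smul, smul_eq_mul]
    have e3 : xi ⬝ᵥ (fun _ => (1 : ℝ)) ≠ 0 := by
      simpa [dotProduct] using hxisum
    exact absurd (mul_right_cancel₀ e3 (e1.symm.trans e2)).symm hne
  · rw [eq_div_iff hden]
    linear_combination -hquad
end

section
/- If a graph G with m edges has exactly two distinct main eigenvalues λ₁ (the largest) and 0, then λ₁ = (Σ_{v∈V(G)} d_v²)/(2m). -/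
open Matrix Finset Polynomial

variable {V : Type*} [Fintype V] [DecidableEq V]

theorem two_main_eigenvalues_zero (G : SimpleGraph V) [DecidableRel G.Adj]
    (m : ℕ) (hm : G.edgeFinset.card = m)
    (lam1 : ℝ)
    (h1 : IsGreatest {μ | G.IsEigenvalue μ} lam1)
    (hmain1 : G.IsMainEigenvalue lam1) (hmain0 : G.IsMainEigenvalue 0)
    (hne : lam1 ≠ 0)
    (honly : ∀ μ, G.IsMainEigenvalue μ → μ = lam1 ∨ μ = 0) :
    lam1 = (∑ v, (G.degree v : ℝ) ^ 2) / (2 * m) := by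
  classical
  set A := G.adjMatrix ℝ with hAdef
  have hA : A.IsHermitian := by
    rw [Matrix.IsHermitian, conjTranspose_eq_transpose_of_trivial]
    exact G.isSymm_adjMatrix
  set b := hA.eigenvectorBasis with hb
  set μ := hA.eigenvalues with hμ
  set c : V → ℝ := fun i => ∑ u, b i u with hc
  have horth : ∀ i j : V, ∑ v, b i v * b j v = if i = j then 1 else 0 := by
    intro i j
    have := orthonormal_iff_ite.mp b.orthonormal i j
    simp [PiLp.inner_apply, RCLike.inner_apply, conj_trivial] at this
    rw [← this]
    exact Finset.sum_congr rfl fun _ _ => mul_comm _ _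
  have hrepr : ∀ v, (1:ℝ) = ∑ i, c i * b i v := by
    intro v
    have h := b.sum_repr' (WithLp.toLp 2 (fun _ => (1:ℝ)) : EuclideanSpace ℝ V)
    have h2 := congrFun (congrArg (fun x : EuclideanSpace ℝ V => (x : V → ℝ)) h) v
    simp only [PiLp.inner_apply, RCLike.inner_apply, conj_trivial, mul_one, WithLp.ofLp_toLp, WithLp.ofLp_sum] at h2
    rw [← h2, Finset.sum_apply]
    simp [smul_eq_mul, hc]
  have heig : ∀ i, A *ᵥ ⇑(b i) = μ i • ⇑(b i) := hA.mulVec_eigenvectorBasis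
  have hAb : ∀ i v, ∑ u, A v u * b i u = μ i * b i v := by
    intro i v
    have := congrFun (heig i) v
    simpa [Matrix.mulVec, dotProduct, smul_eq_mul] using this
  have hdeg : ∀ v, (G.degree v : ℝ) = ∑ i, c i * (μ i * b i v) := by
    intro v
    have h1' : (G.degree v : ℝ) = ∑ u, A v u * 1 := by
      have := SimpleGraph.adjMatrix_mulVec_apply G v (fun _ => (1:ℝ))
      simp only [Matrix.mulVec, dotProduct] at this
      rw [this]
      simp
    calc (G.degree v : ℝ) = ∑ u, A v u * 1 := h1'
      _ = ∑ u, A v u * ∑ i, c i * b i u :=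
          Finset.sum_congr rfl fun u _ => by rw [← hrepr u]
      _ = ∑ i, c i * (μ i * b i v) := by
          simp_rw [Finset.mul_sum]
          rw [Finset.sum_comm]
          refine Finset.sum_congr rfl fun i _ => ?_
          rw [← hAb i v, Finset.mul_sum]
          exact Finset.sum_congr rfl fun u _ => by ring
  have h2m : ∑ v, (G.degree v : ℝ) = ∑ i, c i ^ 2 * μ i := by
    simp_rw [hdeg]
    rw [Finset.sum_comm]
    refine Finset.sum_congr rfl fun i _ => ?_
    rw [← Finset.mul_sum, ← Finset.mul_sum]
    show c i * (μ i * ∑ v, b i v) = c i ^ 2 * μ i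
    rw [show ∑ v, b i v = c i from rfl]
    ring
  have hsq : ∑ v, (G.degree v : ℝ) ^ 2 = ∑ i, c i ^ 2 * μ i ^ 2 := by
    have hpt : ∀ v, (G.degree v : ℝ) ^ 2
        = ∑ i, ∑ j, (c i * μ i) * (c j * μ j) * (b i v * b j v) := by
      intro v
      rw [sq, hdeg v, Finset.sum_mul_sum]
      exact Finset.sum_congr rfl fun i _ => Finset.sum_congr rfl fun j _ => by ring
    simp_rw [hpt]
    rw [Finset.sum_comm]
    refine Finset.sum_congr rfl fun i _ => ?_
    rw [Finset.sum_comm]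
    have hj : ∀ j, ∑ v, (c i * μ i) * (c j * μ j) * (b i v * b j v)
        = (c i * μ i) * (c j * μ j) * (if i = j then 1 else 0) := fun j => by
      rw [← Finset.mul_sum, horth]
    simp_rw [hj]
    simp [mul_ite, Finset.sum_ite_eq]
    ring
  have hkey : ∀ i, c i ^ 2 * μ i ^ 2 = lam1 * (c i ^ 2 * μ i) := by
    intro i
    by_cases hci : c i = 0
    · simp [hci]
    · have hbne : ⇑(b i) ≠ 0 := by
        intro h0
        exact hci (Finset.sum_eq_zero fun u _ => congrFun h0 u)
      have hmain : G.IsMainEigenvalue (μ i) := ⟨⇑(b i), hbne, heig i, hci⟩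
      rcases honly _ hmain with h | h <;> rw [h] <;> ring
  have hfin : ∑ v, (G.degree v : ℝ) ^ 2 = lam1 * ∑ v, (G.degree v : ℝ) := by
    rw [hsq, h2m, Finset.mul_sum]
    exact Finset.sum_congr rfl fun i _ => hkey i
  have h2m' : ∑ v, (G.degree v : ℝ) = 2 * m := by
    have h := G.sum_degrees_eq_twice_card_edges
    rw [hm] at h
    exact_mod_cast h
  have hm0 : (m : ℝ) ≠ 0 := by
    intro h0
    have hm0' : m = 0 := by exact_mod_cast h0
    have hE : G.edgeFinset = ∅ := Finset.card_eq_zero.mp (hm.trans hm0')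
    have hAdj : ∀ v w, ¬ G.Adj v w := by
      intro v w hvw
      have h2 : s(v, w) ∈ G.edgeFinset := by
        rw [SimpleGraph.mem_edgeFinset]
        exact hvw
      rw [hE] at h2
      exact absurd h2 (Finset.notMem_empty _)
    obtain ⟨x, hx0, hx, -⟩ := hmain1
    have hz : A *ᵥ x = 0 := by
      ext v
      simp [Matrix.mulVec, dotProduct, hAdef, SimpleGraph.adjMatrix_apply, hAdj]
    rw [hx] at hz
    rcases smul_eq_zero.mp hz with h | h
    · exact hne h
    · exact hx0 h
  have h2ne : (2 * (m:ℝ)) ≠ 0 := mul_ne_zero two_ne_zero hm0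
  rw [eq_div_iff h2ne, hfin, h2m']
end

section
/- If H is a bipartite harmonic graph with at least one edge and largest eigenvalue λ₁, then −λ₁ is a non-main eigenvalue of H. -/
open Matrix Finset Polynomial

variable {V : Type*} [Fintype V] [DecidableEq V]

theorem bipartite_harmonic_neg_index_nonmain (H : SimpleGraph V) [DecidableRel H.Adj]
    (hbip : H.Colorable 2) (hharm : H.IsHarmonic) (hedge : H.edgeFinset.Nonempty)
    (lam1 : ℝ) (h1 : IsGreatest {μ | H.IsEigenvalue μ} lam1) :
    H.IsNonMainEigenvalue (-lam1) := by
  classical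
  obtain ⟨ℓ, hℓpos, hharmeq⟩ := hharm
  set d : V → ℝ := fun v => (H.degree v : ℝ) with hd
  -- the degree vector is nonzero
  obtain ⟨e, he⟩ := hedge
  have hdne : d ≠ 0 := by
    rw [SimpleGraph.mem_edgeFinset] at he
    induction e with
    | _ a b =>
      intro h0
      have hab : H.Adj a b := he
      have : d a = 0 := congrFun h0 a
      have hdeg : H.degree a ≠ 0 := by
        rw [← SimpleGraph.card_neighborFinset_eq_degree]
        simp only [ne_eq, Finset.card_eq_zero, ← Finset.not_nonempty_iff_eq_empty, not_not]
        exact ⟨b, by simpa using hab⟩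
      exact hdeg (Nat.cast_eq_zero.mp this)
  have hℓeig : H.IsEigenvalue ℓ := ⟨d, hdne, hharmeq⟩
  have hℓle : (ℓ : ℝ) ≤ lam1 := h1.2 hℓeig
  have hlam1pos : 0 < lam1 :=
    lt_of_lt_of_le (by exact_mod_cast hℓpos) hℓle
  -- bipartite sign vector
  obtain ⟨C⟩ := hbip
  set s : V → ℝ := fun v => if C v = 0 then 1 else -1 with hs
  have hs_ne : ∀ v, s v ≠ 0 := by
    intro v; simp only [hs]; split <;> norm_num
  have hs_adj : ∀ {u v : V}, H.Adj u v → s u = -s v := by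
    intro u v h
    have hne := C.valid h
    simp only [hs]
    by_cases hu : C u = 0 <;> by_cases hv : C v = 0
    · exact absurd (hu.trans hv.symm) hne
    · simp [hu, hv]
    · simp [hu, hv]
    · exact absurd ((Fin.eq_one_of_ne_zero _ hu).trans
        (Fin.eq_one_of_ne_zero _ hv).symm) hne
  constructor
  · -- -lam1 is an eigenvalue
    obtain ⟨x, hx0, hx⟩ := h1.1
    refine ⟨fun v => s v * x v, ?_, ?_⟩
    · intro h0
      apply hx0
      funext v
      have := congrFun h0 v
      simp only [Pi.zero_apply] at this ⊢
      rcases mul_eq_zero.mp this with h | h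
      · exact absurd h (hs_ne v)
      · exact h
    · funext v
      rw [SimpleGraph.adjMatrix_mulVec_apply]
      have : ∀ u ∈ H.neighborFinset v, s u * x u = -s v * x u := by
        intro u hu
        rw [SimpleGraph.mem_neighborFinset] at hu
        rw [hs_adj hu.symm]
      rw [Finset.sum_congr rfl this, ← Finset.mul_sum]
      have hxv : ∑ u ∈ H.neighborFinset v, x u = lam1 * x v := by
        have := congrFun hx v
        rwa [SimpleGraph.adjMatrix_mulVec_apply] at this
      rw [hxv]
      simp only [Pi.smul_apply, smul_eq_mul]
      ring
  · -- not main
    rintro ⟨y, hy0, hy, hysum⟩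
    apply hysum
    -- d ⬝ y = 0
    have hsymm : ∀ z : V → ℝ, d ⬝ᵥ (H.adjMatrix ℝ *ᵥ z) = (ℓ : ℝ) * (d ⬝ᵥ z) := by
      intro z
      rw [Matrix.dotProduct_mulVec]
      have hvm : d ᵥ* H.adjMatrix ℝ = (ℓ : ℝ) • d := by
        funext v
        rw [SimpleGraph.adjMatrix_vecMul_apply]
        have := congrFun hharmeq v
        rw [SimpleGraph.adjMatrix_mulVec_apply] at this
        exact this
      rw [hvm, smul_dotProduct, smul_eq_mul]
    have hdy : d ⬝ᵥ y = 0 := by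
      have h1 : d ⬝ᵥ (H.adjMatrix ℝ *ᵥ y) = (ℓ : ℝ) * (d ⬝ᵥ y) := hsymm y
      have h2 : d ⬝ᵥ (H.adjMatrix ℝ *ᵥ y) = -lam1 * (d ⬝ᵥ y) := by
        rw [hy, dotProduct_smul, smul_eq_mul]
      have hne : (ℓ : ℝ) ≠ -lam1 := by
        have : (0:ℝ) < ℓ := by exact_mod_cast hℓpos
        linarith
      have := h1.symm.trans h2
      rcases mul_eq_mul_right_iff.mp (by linarith : (ℓ:ℝ) * (d ⬝ᵥ y) = -lam1 * (d ⬝ᵥ y)) with h | h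
      · exact absurd h hne
      · exact h
    -- ∑ y = 0
    have hsum : ∑ v, (H.adjMatrix ℝ *ᵥ y) v = d ⬝ᵥ y := by
      have : ∑ v, (H.adjMatrix ℝ *ᵥ y) v = (fun _ : V => (1:ℝ)) ⬝ᵥ (H.adjMatrix ℝ *ᵥ y) := by
        simp [dotProduct]
      rw [this, Matrix.dotProduct_mulVec]
      have hvm : (fun _ : V => (1:ℝ)) ᵥ* H.adjMatrix ℝ = d := by
        funext v
        rw [SimpleGraph.adjMatrix_vecMul_apply]
        rw [Finset.sum_const, nsmul_eq_mul, mul_one,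
          SimpleGraph.card_neighborFinset_eq_degree]
      rw [hvm]
    have : -lam1 * ∑ v, y v = 0 := by
      have h3 : ∑ v, (H.adjMatrix ℝ *ᵥ y) v = -lam1 * ∑ v, y v := by
        rw [hy]
        simp [Finset.mul_sum]
      rw [← h3, hsum, hdy]
    have hne : -lam1 ≠ 0 := by linarith
    exact (mul_eq_zero.mp this).resolve_left hne
end

section
/- A graph H is harmonic if and only if every main eigenvalue of H belongs to the set {0, λ₁}, where λ₁ is the largest eigenvalue of H. -/
open Matrix Finset Polynomial

variable {V : Type*} [Fintype V] [DecidableEq V]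

set_option linter.unusedSectionVars false

lemma eval_charpoly'' {R : Type*} [CommRing R] (M : Matrix V V R) (μ : R) :
    M.charpoly.eval μ = (Matrix.diagonal (fun _ => μ) - M).det := by
  rw [Matrix.charpoly, ← Polynomial.coe_evalRingHom, RingHom.map_det]
  congr 1
  ext i j
  by_cases h : i = j <;>
    simp [Matrix.charmatrix_apply, Matrix.diagonal_apply, h]

lemma adj_symm_dot (H : SimpleGraph V) [DecidableRel H.Adj] (x y : V → ℝ) :
    x ⬝ᵥ ((H.adjMatrix ℝ) *ᵥ y) = ((H.adjMatrix ℝ) *ᵥ x) ⬝ᵥ y := by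
  rw [Matrix.dotProduct_mulVec, ← Matrix.mulVec_transpose, H.isSymm_adjMatrix]

lemma adj_mulVec_ones (H : SimpleGraph V) [DecidableRel H.Adj] :
    (H.adjMatrix ℝ) *ᵥ (fun _ => (1:ℝ)) = fun v => (H.degree v : ℝ) := by
  ext v
  rw [show (fun _ : V => (1:ℝ)) = Function.const V 1 from rfl, SimpleGraph.adjMatrix_mulVec_const_apply, mul_one]

lemma adj_herm (H : SimpleGraph V) [DecidableRel H.Adj] : (H.adjMatrix ℝ).IsHermitian := by
  ext i j
  simp [Matrix.conjTranspose_apply, SimpleGraph.adjMatrix_apply, SimpleGraph.adj_comm]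

set_option maxHeartbeats 1000000 in
lemma fwd (H : SimpleGraph V) [DecidableRel H.Adj]
    (lam1 : ℝ) (h1 : IsGreatest {μ | H.IsEigenvalue μ} lam1) (hH : H.IsHarmonic) :
    ∀ μ, H.IsMainEigenvalue μ → μ = 0 ∨ μ = lam1 := by
  obtain ⟨ℓ, hℓpos, hd⟩ := hH
  set A := H.adjMatrix ℝ with hA
  set d : V → ℝ := fun v => (H.degree v : ℝ) with hdd
  rintro μ ⟨x, hx0, hx, hxs⟩
  rw [← hA] at hx
  have hAnn : ∀ v u, 0 ≤ A v u := by
    intro v u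
    rw [hA, SimpleGraph.adjMatrix_apply]
    split_ifs <;> norm_num
  by_cases hdz : d = 0
  · -- the graph has no edges
    have hA0 : A = 0 := by
      ext v u
      rw [hA, SimpleGraph.adjMatrix_apply]
      suffices h : ¬ H.Adj v u by simp [h]
      intro h
      have hv : 0 < H.degree v := (H.degree_pos_iff_exists_adj v).2 ⟨u, h⟩
      have := congrFun hdz v
      simp only [hdd, Pi.zero_apply, Nat.cast_eq_zero] at this
      omega
    rw [hA0, Matrix.zero_mulVec] at hx
    left
    by_contra hμ
    exact hx0 (by simpa [eq_comm, hμ] using hx.symm)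
  · have hdnn : ∀ v, 0 ≤ d v := fun v => Nat.cast_nonneg _
    have hle : (ℓ:ℝ) ≤ lam1 := h1.2 ⟨d, hdz, hd⟩
    -- prove lam1 = ℓ
    obtain ⟨z, hz0, hz⟩ := h1.1
    set y : V → ℝ := fun v => |z v| with hy
    have hyn : ∀ v, 0 ≤ y v := fun v => abs_nonneg _
    have hlampos : (0:ℝ) < lam1 := lt_of_lt_of_le (by exact_mod_cast hℓpos) hle
    have hkey : ∀ v, lam1 * y v ≤ (A *ᵥ y) v := by
      intro v
      have h2 : |(A *ᵥ z) v| ≤ (A *ᵥ y) v := by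
        simp only [Matrix.mulVec, dotProduct]
        calc |∑ u, A v u * z u| ≤ ∑ u, |A v u * z u| := Finset.abs_sum_le_sum_abs _ _
          _ = ∑ u, A v u * |z u| := by
              refine Finset.sum_congr rfl fun u _ => ?_
              rw [abs_mul, abs_of_nonneg (hAnn v u)]
      have h3 : |(A *ᵥ z) v| = |lam1| * y v := by rw [hz]; simp [abs_mul, hy]
      calc lam1 * y v ≤ |lam1| * y v := mul_le_mul_of_nonneg_right (le_abs_self _) (hyn v)
        _ = |(A *ᵥ z) v| := h3.symm
        _ ≤ _ := h2
    have hlam : lam1 = (ℓ:ℝ) := by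
      by_cases hSz : d ⬝ᵥ y = 0
      · exfalso
        have hterm : ∀ v ∈ Finset.univ, d v * y v = 0 := by
          rw [dotProduct] at hSz
          exact (Finset.sum_eq_zero_iff_of_nonneg
            (fun v _ => mul_nonneg (hdnn v) (hyn v))).1 hSz
        have hAy : A *ᵥ y = 0 := by
          ext v
          simp only [Matrix.mulVec, dotProduct, Pi.zero_apply]
          refine Finset.sum_eq_zero fun u _ => ?_
          by_cases h : H.Adj v u
          · have hdu : 0 < H.degree u := (H.degree_pos_iff_exists_adj u).2 ⟨v, h.symm⟩
            have : d u ≠ 0 := by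
              show (H.degree u : ℝ) ≠ 0
              exact_mod_cast hdu.ne'
            have hyu : y u = 0 := by
              rcases mul_eq_zero.1 (hterm u (Finset.mem_univ u)) with h' | h'
              · exact absurd h' this
              · exact h'
            rw [hyu, mul_zero]
          · rw [hA]; simp [SimpleGraph.adjMatrix_apply, h]
        have hyz : ∀ v, y v = 0 := by
          intro v
          have hk := hkey v
          rw [hAy, Pi.zero_apply] at hk
          nlinarith [hyn v]
        exact hz0 (funext fun v => abs_eq_zero.mp (hyz v))
      · have hSpos : 0 < d ⬝ᵥ y :=
          lt_of_le_of_ne (Finset.sum_nonneg fun v _ => mul_nonneg (hdnn v) (hyn v))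
            (Ne.symm hSz)
        have h4 : lam1 * (d ⬝ᵥ y) ≤ (ℓ:ℝ) * (d ⬝ᵥ y) := by
          have e1 : (A *ᵥ d) ⬝ᵥ y = (ℓ:ℝ) * (d ⬝ᵥ y) := by
            rw [hd, smul_dotProduct]; rfl
          have e2 : lam1 * (d ⬝ᵥ y) ≤ d ⬝ᵥ (A *ᵥ y) := by
            rw [dotProduct, dotProduct, Finset.mul_sum]
            refine Finset.sum_le_sum fun v _ => ?_
            calc lam1 * (d v * y v) = d v * (lam1 * y v) := by ring
              _ ≤ d v * (A *ᵥ y) v := mul_le_mul_of_nonneg_left (hkey v) (hdnn v)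
          rw [← e1, ← adj_symm_dot]
          exact e2
        exact le_antisymm (le_of_mul_le_mul_right h4 hSpos) hle
    -- classify μ
    have e1 : x ⬝ᵥ (A *ᵥ d) = (ℓ:ℝ) * (x ⬝ᵥ d) := by
      rw [hd, dotProduct_smul]; rfl
    have e2 : x ⬝ᵥ (A *ᵥ d) = μ * (x ⬝ᵥ d) := by
      rw [adj_symm_dot, hx, smul_dotProduct]; rfl
    by_cases hμ : μ = (ℓ:ℝ)
    · right; rw [hμ, hlam]
    · left
      have hxd : x ⬝ᵥ d = 0 := by
        by_contra h
        exact hμ (mul_right_cancel₀ h (e2.symm.trans e1))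
      have e3 : x ⬝ᵥ d = μ * ∑ v, x v := by
        rw [hdd, ← adj_mulVec_ones H, adj_symm_dot, hx, smul_dotProduct]
        simp [dotProduct]
      rw [e3] at hxd
      rcases mul_eq_zero.1 hxd with h | h
      · exact h
      · exact absurd h hxs

set_option maxHeartbeats 1000000 in
lemma bwd (H : SimpleGraph V) [DecidableRel H.Adj]
    (lam1 : ℝ) (h1 : IsGreatest {μ | H.IsEigenvalue μ} lam1)
    (hmain : ∀ μ, H.IsMainEigenvalue μ → μ = 0 ∨ μ = lam1) : H.IsHarmonic := by
  set A := H.adjMatrix ℝ with hA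
  set d : V → ℝ := fun v => (H.degree v : ℝ) with hdd
  by_cases hdz : d = 0
  · exact ⟨1, one_pos, by rw [show (fun v => (H.degree v : ℝ)) = d from rfl, hdz]; simp⟩
  · have hHerm := adj_herm H
    set u := hHerm.eigenvectorBasis with hu
    set μs := hHerm.eigenvalues with hμs
    set w : EuclideanSpace ℝ V := WithLp.toLp 2 (fun _ => (1:ℝ)) with hw
    set c : V → ℝ := fun i => ∑ v, u i v with hc
    have hinner : ∀ i, (inner ℝ (u i) w : ℝ) = c i := by
      intro i
      simp [PiLp.inner_apply, RCLike.inner_apply, hw, hc]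
    have hexp : (fun _ => (1:ℝ)) = ∑ i, c i • (u i : V → ℝ) := by
      have := u.sum_repr' w
      simp_rw [hinner] at this
      have h2 := congrArg WithLp.ofLp this
      simp only [WithLp.ofLp_sum, WithLp.ofLp_smul, hw] at h2
      exact h2.symm
    have heig : ∀ i, A *ᵥ (u i : V → ℝ) = μs i • (u i : V → ℝ) :=
      fun i => hHerm.mulVec_eigenvectorBasis i
    have hlin : ∀ (g : V → (V → ℝ)), A *ᵥ (∑ i, g i) = ∑ i, A *ᵥ (g i) := by
      intro g
      exact map_sum A.mulVecLin g Finset.univ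
    have hAw : A *ᵥ (fun _ => (1:ℝ)) = ∑ i, (c i * μs i) • (u i : V → ℝ) := by
      rw [hexp, hlin]
      refine Finset.sum_congr rfl fun i _ => ?_
      rw [Matrix.mulVec_smul, heig i, smul_smul]
    have hterm : ∀ i, (c i * μs i) • (μs i • (u i : V → ℝ)) =
        lam1 • ((c i * μs i) • (u i : V → ℝ)) := by
      intro i
      by_cases hci : c i = 0
      · simp [hci]
      · have hiu : (u i : V → ℝ) ≠ 0 := by
          intro h
          exact u.orthonormal.ne_zero i (by ext v; exact congrFun h v)
        rcases hmain (μs i) ⟨(u i : V → ℝ), hiu, heig i, hci⟩ with h | h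
        · simp [h]
        · rw [smul_smul, smul_smul, h]; ring_nf
    have hAd : A *ᵥ d = lam1 • d := by
      rw [hdd, ← adj_mulVec_ones H, ← hA, hAw, hlin]
      rw [Finset.smul_sum]
      refine Finset.sum_congr rfl fun i _ => ?_
      rw [Matrix.mulVec_smul, heig i]
      exact hterm i
    -- extract that lam1 is a positive rational a2/b
    set b : ℕ := ∑ v, H.degree v with hb
    set a2 : ℕ := ∑ v, H.degree v * H.degree v with ha2
    obtain ⟨v0, hv0⟩ : ∃ v, H.degree v ≠ 0 := by
      by_contra h
      push_neg at h
      exact hdz (funext fun v => by simp [hdd, h v])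
    have hbpos : 0 < b := by
      have : H.degree v0 ≤ b := Finset.single_le_sum (f := fun v => H.degree v)
        (fun v _ => Nat.zero_le _) (Finset.mem_univ v0)
      omega
    have ha2pos : 0 < a2 := by
      have : H.degree v0 * H.degree v0 ≤ a2 := Finset.single_le_sum
        (f := fun v => H.degree v * H.degree v) (fun v _ => Nat.zero_le _) (Finset.mem_univ v0)
      have h1' : 1 ≤ H.degree v0 := Nat.one_le_iff_ne_zero.2 hv0
      have h2' : 1 * 1 ≤ H.degree v0 * H.degree v0 := Nat.mul_le_mul h1' h1'
      omega
    have hsum : lam1 * (b : ℝ) = (a2 : ℝ) := by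
      have e1 : ∑ v, (A *ᵥ d) v = lam1 * (b : ℝ) := by
        rw [hAd]
        simp [Finset.mul_sum, hb, hdd]
      have e2 : ∑ v, (A *ᵥ d) v = (a2 : ℝ) := by
        have : ∑ v, (A *ᵥ d) v = (fun _ => (1:ℝ)) ⬝ᵥ (A *ᵥ d) := by
          simp [dotProduct]
        rw [this, adj_symm_dot, ← hA, adj_mulVec_ones H, ← hdd]
        simp [dotProduct, ha2, hdd]
      rw [← e1, e2]
    have hlampos : 0 < lam1 := by
      have hb' : (0:ℝ) < (b:ℝ) := by exact_mod_cast hbpos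
      have ha' : (0:ℝ) < (a2:ℝ) := by exact_mod_cast ha2pos
      nlinarith
    -- lam1 is an algebraic integer
    have hint : IsIntegral ℤ lam1 := by
      refine ⟨(H.adjMatrix ℤ).charpoly, (H.adjMatrix ℤ).charpoly_monic, ?_⟩
      rw [Polynomial.eval₂_eq_eval_map]
      have hmap : (H.adjMatrix ℤ).map (Int.castRingHom ℝ) = H.adjMatrix ℝ := by
        ext i j
        simp [SimpleGraph.adjMatrix_apply, Matrix.map_apply, apply_ite]
      rw [show (algebraMap ℤ ℝ) = Int.castRingHom ℝ from rfl, ← Matrix.charpoly_map, hmap,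
        eval_charpoly'']
      obtain ⟨z, hz0, hz⟩ := h1.1
      refine (Matrix.exists_mulVec_eq_zero_iff).1 ⟨z, hz0, ?_⟩
      rw [Matrix.sub_mulVec]
      funext v
      simp [Matrix.mulVec_diagonal, hz, hA]
    -- hence lam1 is a positive integer
    set q : ℚ := (a2 : ℚ) / (b : ℚ) with hqdef
    have hq : ((q : ℚ) : ℝ) = lam1 := by
      rw [hqdef]
      push_cast
      rw [div_eq_iff (show ((b:ℕ):ℝ) ≠ 0 by exact_mod_cast hbpos.ne')]
      linarith [hsum]
    have hq2 : IsIntegral ℤ q := by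
      have : IsIntegral ℤ ((algebraMap ℚ ℝ) q) := by
        rwa [eq_ratCast (algebraMap ℚ ℝ) q, hq]
      exact (isIntegral_algebraMap_iff ((algebraMap ℚ ℝ).injective)).1 this
    obtain ⟨zz, hzz⟩ := IsIntegrallyClosed.isIntegral_iff.1 hq2
    have hzzr : ((zz : ℤ) : ℝ) = lam1 := by
      rw [← hq, ← hzz]
      push_cast
      norm_num
    have hzzpos : 0 < zz := by
      by_contra h
      push_neg at h
      have : ((zz:ℤ):ℝ) ≤ 0 := by exact_mod_cast h
      linarith [hzzr ▸ hlampos]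
    refine ⟨zz.toNat, by omega, ?_⟩
    rw [show (fun v => (H.degree v : ℝ)) = d from rfl, ← hA]
    have : ((zz.toNat : ℕ) : ℝ) = lam1 := by
      rw [← hzzr]
      norm_cast
      omega
    rw [this]
    exact hAd


theorem harmonic_iff_main_eigenvalues (H : SimpleGraph V) [DecidableRel H.Adj]
    (lam1 : ℝ) (h1 : IsGreatest {μ | H.IsEigenvalue μ} lam1) :
    H.IsHarmonic ↔ ∀ μ, H.IsMainEigenvalue μ → μ = 0 ∨ μ = lam1 :=
  ⟨fwd H lam1 h1, bwd H lam1 h1⟩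
end

section
/- A graph G with m edges is harmonic if and only if λ₁ = (Σ_{v∈V(G)} d_v²)/(2m) and G has at most two main eigenvalues. -/
open Matrix Finset Polynomial

variable {V : Type*} [Fintype V] [DecidableEq V]

set_option linter.unusedSectionVars false

section Aux
variable (G : SimpleGraph V) [DecidableRel G.Adj]

lemma adjHerm : (G.adjMatrix ℝ).IsHermitian := by
  ext i j
  simp [Matrix.IsHermitian, Matrix.conjTranspose_apply, SimpleGraph.adj_comm]

lemma symdot (x y : V → ℝ) :
    (G.adjMatrix ℝ *ᵥ x) ⬝ᵥ y = x ⬝ᵥ (G.adjMatrix ℝ *ᵥ y) := by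
  rw [Matrix.dotProduct_mulVec, ← Matrix.mulVec_transpose, SimpleGraph.transpose_adjMatrix,
    dotProduct_comm]

noncomputable def evec : OrthonormalBasis V ℝ (EuclideanSpace ℝ V) :=
  (adjHerm G).eigenvectorBasis

noncomputable def evl : V → ℝ := (adjHerm G).eigenvalues

noncomputable def co (y : V → ℝ) (i : V) : ℝ := (⇑(evec G i) : V → ℝ) ⬝ᵥ y

lemma inner_dot (x y : EuclideanSpace ℝ V) : (inner ℝ x y : ℝ) = (x : V → ℝ) ⬝ᵥ y := by
  simp [PiLp.inner_apply, dotProduct, RCLike.inner_apply, mul_comm]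

lemma co_eq_repr (y : V → ℝ) (i : V) : co G y i = (evec G).repr (WithLp.toLp 2 y) i := by
  rw [OrthonormalBasis.repr_apply_apply, inner_dot]; rfl

lemma co_mulVec (y : V → ℝ) (i : V) :
    co G (G.adjMatrix ℝ *ᵥ y) i = evl G i * co G y i := by
  unfold co evec evl
  rw [← symdot, (adjHerm G).mulVec_eigenvectorBasis, smul_dotProduct]
  rfl

lemma dot_eq_sum_co (x y : V → ℝ) : x ⬝ᵥ y = ∑ i, co G x i * co G y i := by
  have h := (evec G).repr.inner_map_map (WithLp.toLp 2 x) (WithLp.toLp 2 y)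
  rw [inner_dot, inner_dot, WithLp.ofLp_toLp, WithLp.ofLp_toLp] at h
  rw [← h, dotProduct]
  simp only [co_eq_repr]

lemma ext_co {x y : V → ℝ} (h : ∀ i, co G x i = co G y i) : x = y := by
  have : (evec G).repr (WithLp.toLp 2 x) = (evec G).repr (WithLp.toLp 2 y) := by
    ext i; rw [← co_eq_repr, ← co_eq_repr, h]
  exact congrArg WithLp.ofLp ((evec G).repr.injective this)

end Aux

section Aux2
variable (G : SimpleGraph V) [DecidableRel G.Adj]

lemma co_smul (r : ℝ) (y : V → ℝ) (i : V) : co G (r • y) i = r * co G y i := by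
  unfold co
  rw [dotProduct_smul]
  rfl

lemma co_zero (i : V) : co G (0 : V → ℝ) i = 0 := by
  unfold co; simp

lemma mulVec_evec (i : V) :
    G.adjMatrix ℝ *ᵥ ⇑(evec G i) = evl G i • ⇑(evec G i) :=
  (adjHerm G).mulVec_eigenvectorBasis i

lemma evec_ne_zero (i : V) : (⇑(evec G i) : V → ℝ) ≠ 0 := by
  intro h
  apply (evec G).orthonormal.ne_zero i
  apply (WithLp.equiv 2 _).injective
  simpa using h

lemma evl_isEigen (i : V) : G.IsEigenvalue (evl G i) :=
  ⟨⇑(evec G i), evec_ne_zero G i, mulVec_evec G i⟩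

lemma eig_exists {μ : ℝ} (h : G.IsEigenvalue μ) : ∃ i, evl G i = μ := by
  obtain ⟨x, hx0, hx⟩ := h
  by_contra hc
  push_neg at hc
  apply hx0
  apply ext_co G (y := 0)
  intro i
  have h1 : evl G i * co G x i = μ * co G x i := by
    rw [← co_mulVec, hx, co_smul]
  rw [co_zero]
  by_contra hne
  exact hc i (by
    have := mul_right_cancel₀ hne h1
    exact this)

lemma dot_one_left (x : V → ℝ) : (fun _ => (1:ℝ)) ⬝ᵥ x = ∑ v, x v := by
  simp [dotProduct]

lemma main_of_co (i : V) (h : co G (fun _ => (1:ℝ)) i ≠ 0) :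
    G.IsMainEigenvalue (evl G i) := by
  classical
  set u : V → ℝ := fun _ => (1:ℝ) with hu
  set p : V → ℝ :=
    WithLp.ofLp ((evec G).repr.symm (WithLp.toLp 2 (fun j => if evl G j = evl G i then co G u j else 0)) : EuclideanSpace ℝ V)
    with hp
  have hco : ∀ k, co G p k = if evl G k = evl G i then co G u k else 0 := by
    intro k
    rw [co_eq_repr, hp]
    exact congrArg (fun z : EuclideanSpace ℝ V => z k) ((evec G).repr.apply_symm_apply _)
  have hAp : G.adjMatrix ℝ *ᵥ p = evl G i • p := by
    apply ext_co G
    intro k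
    rw [co_mulVec, co_smul, hco]
    by_cases hk : evl G k = evl G i
    · simp [hk, hco k]
    · simp [hk, hco k]
  have hsum : ∑ v, p v = ∑ k, if evl G k = evl G i then (co G u k)^2 else 0 := by
    rw [← dot_one_left, ← hu, dot_eq_sum_co G]
    refine Finset.sum_congr rfl fun k _ => ?_
    rw [hco]
    by_cases hk : evl G k = evl G i <;> simp [hk, sq]
  have hpos : 0 < ∑ v, p v := by
    rw [hsum]
    apply Finset.sum_pos' (fun k _ => by positivity)
    exact ⟨i, Finset.mem_univ i, by simp [pow_two_pos_of_ne_zero, h]⟩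
  refine ⟨p, ?_, hAp, by linarith⟩
  intro hp0
  rw [hp0] at hpos
  simp at hpos

lemma lam1_main {lam1 : ℝ} (h1 : IsGreatest {μ | G.IsEigenvalue μ} lam1) :
    G.IsMainEigenvalue lam1 := by
  obtain ⟨i0, hi0⟩ := eig_exists G h1.1
  set x : V → ℝ := ⇑(evec G i0) with hxdef
  set y : V → ℝ := fun v => |x v| with hydef
  have hAx : G.adjMatrix ℝ *ᵥ x = lam1 • x := by
    rw [← hi0]; exact mulVec_evec G i0
  have hyx : y ⬝ᵥ y = x ⬝ᵥ x := by
    simp [dotProduct, hydef, abs_mul_abs_self]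
  have expand : ∀ z : V → ℝ, z ⬝ᵥ (G.adjMatrix ℝ *ᵥ z)
      = ∑ v, ∑ u, (G.adjMatrix ℝ) v u * (z v * z u) := by
    intro z
    simp only [dotProduct, Matrix.mulVec, Finset.mul_sum]
    exact Finset.sum_congr rfl fun v _ => Finset.sum_congr rfl fun u _ => by
      ring
  have hr2 : x ⬝ᵥ (G.adjMatrix ℝ *ᵥ x) ≤ y ⬝ᵥ (G.adjMatrix ℝ *ᵥ y) := by
    rw [expand, expand]
    refine Finset.sum_le_sum fun v _ => Finset.sum_le_sum fun u _ => ?_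
    have hnn : (0:ℝ) ≤ (G.adjMatrix ℝ) v u := by
      simp only [SimpleGraph.adjMatrix_apply]; split <;> norm_num
    refine mul_le_mul_of_nonneg_left ?_ hnn
    calc x v * x u ≤ |x v * x u| := le_abs_self _
      _ = y v * y u := by rw [hydef]; simp [abs_mul]
  have hray : y ⬝ᵥ (G.adjMatrix ℝ *ᵥ y) = ∑ k, evl G k * (co G y k)^2 := by
    rw [dot_eq_sum_co G]
    exact Finset.sum_congr rfl fun k _ => by rw [co_mulVec]; ring
  have hyy : y ⬝ᵥ y = ∑ k, (co G y k)^2 := by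
    rw [dot_eq_sum_co G]
    exact Finset.sum_congr rfl fun k _ => by ring
  have hxAx : x ⬝ᵥ (G.adjMatrix ℝ *ᵥ x) = lam1 * (x ⬝ᵥ x) := by
    rw [hAx, dotProduct_smul]; rfl
  have hle : ∀ k, evl G k ≤ lam1 := fun k => h1.2 (evl_isEigen G k)
  have hsplit : ∑ k, (lam1 - evl G k) * (co G y k)^2
      = lam1 * (y ⬝ᵥ y) - (y ⬝ᵥ (G.adjMatrix ℝ *ᵥ y)) := by
    rw [hyy, hray, Finset.mul_sum, ← Finset.sum_sub_distrib]
    exact Finset.sum_congr rfl fun k _ => by ring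
  have hkey : ∑ k, (lam1 - evl G k) * (co G y k)^2 = 0 := by
    have h1' : ∑ k, (lam1 - evl G k) * (co G y k)^2 ≤ 0 := by
      rw [hsplit, hyx]
      linarith
    have h2' : ∀ k ∈ Finset.univ, (0:ℝ) ≤ (lam1 - evl G k) * (co G y k)^2 :=
      fun k _ => mul_nonneg (by linarith [hle k]) (sq_nonneg _)
    linarith [Finset.sum_nonneg h2']
  have hterm : ∀ k, (lam1 - evl G k) * (co G y k)^2 = 0 := by
    intro k
    have := (Finset.sum_eq_zero_iff_of_nonneg (fun k _ =>
      mul_nonneg (by linarith [hle k]) (sq_nonneg (co G y k)))).mp hkey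
    exact this k (Finset.mem_univ k)
  have hAy : G.adjMatrix ℝ *ᵥ y = lam1 • y := by
    apply ext_co G
    intro k
    rw [co_mulVec, co_smul]
    rcases mul_eq_zero.mp (hterm k) with h' | h'
    · rw [sub_eq_zero] at h'; rw [h']
    · rw [pow_eq_zero_iff (two_ne_zero)] at h'
      rw [h', mul_zero, mul_zero]
  have hyne : y ≠ 0 := by
    intro h
    apply evec_ne_zero G i0
    rw [← hxdef]
    funext v
    have := congrFun h v
    simpa [hydef, abs_eq_zero] using this
  have hsumne : ∑ v, y v ≠ 0 := by
    intro h
    apply hyne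
    funext v
    have := (Finset.sum_eq_zero_iff_of_nonneg (fun v _ => by
      rw [hydef]; positivity)).mp h v (Finset.mem_univ v)
    simpa using this
  exact ⟨y, hyne, hAy, hsumne⟩

lemma mulVec_one : G.adjMatrix ℝ *ᵥ (fun _ => (1:ℝ)) = fun v => (G.degree v : ℝ) := by
  funext v
  simp [SimpleGraph.adjMatrix_mulVec_apply]

end Aux2

section Aux3
variable (G : SimpleGraph V) [DecidableRel G.Adj]

lemma eig_isIntegral {μ : ℝ} (h : G.IsEigenvalue μ) : IsIntegral ℤ μ := by
  obtain ⟨x, hx0, hx⟩ := h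
  have hmv : (μ • (1 : Matrix V V ℝ) - G.adjMatrix ℝ) *ᵥ x = 0 := by
    rw [Matrix.sub_mulVec, Matrix.smul_mulVec, Matrix.one_mulVec, hx, sub_self]
  have hdet : (μ • (1 : Matrix V V ℝ) - G.adjMatrix ℝ).det = 0 :=
    Matrix.exists_mulVec_eq_zero_iff.mp ⟨x, hx0, hmv⟩
  refine ⟨(G.adjMatrix ℤ).charpoly, (G.adjMatrix ℤ).charpoly_monic, ?_⟩
  have hmap : (G.adjMatrix ℤ).map (Int.castRingHom ℝ) = G.adjMatrix ℝ := by
    ext i j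
    simp [Matrix.map_apply, apply_ite]
  have h2 : (Polynomial.aeval μ) (G.adjMatrix ℤ).charpoly
      = Polynomial.eval μ (G.adjMatrix ℝ).charpoly := by
    rw [Polynomial.aeval_def, Polynomial.eval₂_eq_eval_map, ← hmap, Matrix.charpoly_map]
    rfl
  have h3 : Polynomial.eval μ (G.adjMatrix ℝ).charpoly
      = (μ • (1 : Matrix V V ℝ) - G.adjMatrix ℝ).det := by
    rw [Matrix.charpoly, ← Polynomial.coe_evalRingHom, RingHom.map_det]
    congr 1
    ext i j
    by_cases hij : i = j
    · subst hij
      simp [Matrix.charmatrix_apply_eq, Matrix.sub_apply, Matrix.one_apply_eq]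
    · simp [RingHom.mapMatrix_apply, Matrix.charmatrix_apply_ne _ _ _ hij, Matrix.sub_apply,
        Matrix.one_apply_ne hij, Matrix.map_apply, apply_ite (Polynomial.eval μ)]
  rw [← Polynomial.aeval_def, h2, h3, hdet]

end Aux3

theorem harmonic_iff_index_and_two_main (G : SimpleGraph V) [DecidableRel G.Adj]
    (m : ℕ) (hm : G.edgeFinset.card = m)
    (lam1 : ℝ) (h1 : IsGreatest {μ | G.IsEigenvalue μ} lam1) :
    G.IsHarmonic ↔
      (lam1 = (∑ v, (G.degree v : ℝ) ^ 2) / (2 * m) ∧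
        ∃ a b : ℝ, ∀ μ, G.IsMainEigenvalue μ → μ = a ∨ μ = b) := by
  classical
  set d : V → ℝ := fun v => (G.degree v : ℝ) with hd
  have hAu : G.adjMatrix ℝ *ᵥ (fun _ => (1:ℝ)) = d := mulVec_one G
  have hcast : (∑ v, (G.degree v : ℝ) ^ 2) = ∑ v, d v ^ 2 := rfl
  have hsumd : ∑ v, d v = 2 * (m:ℝ) := by
    have h := G.sum_degrees_eq_twice_card_edges
    rw [hm] at h
    calc ∑ v, d v = ((∑ v, G.degree v : ℕ) : ℝ) := by push_cast [hd]; rfl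
      _ = 2 * (m:ℝ) := by rw [h]; push_cast; ring
  constructor
  · rintro ⟨ℓ, hℓpos, hharm⟩
    rw [← hd] at hharm
    by_cases hdeg : ∀ v, G.degree v = 0
    · have hA0 : G.adjMatrix ℝ = 0 := by
        ext v w
        simp only [SimpleGraph.adjMatrix_apply, Matrix.zero_apply]
        rw [if_neg]
        intro hadj
        have : 0 < G.degree v := (G.degree_pos_iff_exists_adj v).mpr ⟨w, hadj⟩
        rw [hdeg v] at this
        omega
      have hm0 : m = 0 := by
        have h2 : 2 * m = 0 := by
          rw [← hm, ← G.sum_degrees_eq_twice_card_edges]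
          exact Finset.sum_eq_zero fun v _ => hdeg v
        omega
      have hlam0 : lam1 = 0 := by
        obtain ⟨x, hx0, hx⟩ := h1.1
        rw [hA0, Matrix.zero_mulVec] at hx
        rcases smul_eq_zero.mp hx.symm with h | h
        · exact h
        · exact absurd h hx0
      refine ⟨?_, 0, 0, ?_⟩
      · simp [hdeg, hm0, hlam0]
      · rintro μ ⟨x, hx0, hx, -⟩
        rw [hA0, Matrix.zero_mulVec] at hx
        rcases smul_eq_zero.mp hx.symm with h | h
        · exact Or.inl h
        · exact absurd h hx0
    · push_neg at hdeg
      obtain ⟨v0, hv0⟩ := hdeg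
      have hdne : d ≠ 0 := by
        intro h
        apply hv0
        have := congrFun h v0
        simpa [hd] using this
      have hEll : G.IsEigenvalue (ℓ:ℝ) := ⟨d, hdne, hharm⟩
      have hle : (ℓ:ℝ) ≤ lam1 := h1.2 hEll
      have hmainb : ∀ μ, G.IsMainEigenvalue μ → μ = (ℓ:ℝ) ∨ μ = 0 := by
        rintro μ ⟨x, hx0, hx, hsx⟩
        have k1 : d ⬝ᵥ x = μ * ∑ v, x v := by
          rw [← hAu, symdot, hx, dotProduct_smul, dot_one_left]
          rfl
        have k2 : (ℓ:ℝ) * (d ⬝ᵥ x) = μ * (d ⬝ᵥ x) := by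
          calc (ℓ:ℝ) * (d ⬝ᵥ x) = ((ℓ:ℝ) • d) ⬝ᵥ x := by
                rw [smul_dotProduct]; rfl
            _ = (G.adjMatrix ℝ *ᵥ d) ⬝ᵥ x := by rw [hharm]
            _ = d ⬝ᵥ (G.adjMatrix ℝ *ᵥ x) := symdot G d x
            _ = μ * (d ⬝ᵥ x) := by rw [hx, dotProduct_smul]; rfl
        by_cases hμℓ : μ = (ℓ:ℝ)
        · exact Or.inl hμℓ
        · right
          have hdx : d ⬝ᵥ x = 0 := by
            by_contra hne
            exact hμℓ (mul_right_cancel₀ hne k2).symm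
          rw [hdx] at k1
          rcases mul_eq_zero.mp k1.symm with h | h
          · exact h
          · exact absurd h hsx
      have hlam1 : lam1 = (ℓ:ℝ) := by
        rcases hmainb lam1 (lam1_main G h1) with h | h
        · exact h
        · exfalso
          have h1le : (1:ℝ) ≤ (ℓ:ℝ) := by exact_mod_cast hℓpos
          rw [h] at hle
          linarith
      have hsum2 : ∑ v, d v ^ 2 = (ℓ:ℝ) * (2 * m) := by
        calc ∑ v, d v ^ 2 = d ⬝ᵥ d := by simp [dotProduct, sq]
          _ = (G.adjMatrix ℝ *ᵥ fun _ => (1:ℝ)) ⬝ᵥ d := by rw [hAu]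
          _ = (fun _ => (1:ℝ)) ⬝ᵥ (G.adjMatrix ℝ *ᵥ d) := symdot G _ d
          _ = (ℓ:ℝ) * ∑ v, d v := by
              rw [hharm, dotProduct_smul, dot_one_left]; rfl
          _ = (ℓ:ℝ) * (2 * m) := by rw [hsumd]
      have hm0 : (2 * m : ℝ) ≠ 0 := by
        have h1v : (1:ℝ) ≤ d v0 := by
          show (1:ℝ) ≤ (G.degree v0 : ℝ)
          exact_mod_cast Nat.one_le_iff_ne_zero.mpr hv0
        have hpos : 0 < ∑ v, d v :=
          Finset.sum_pos' (fun v _ => show (0:ℝ) ≤ (G.degree v : ℝ) by positivity)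
            ⟨v0, Finset.mem_univ v0, by linarith⟩
        rw [hsumd] at hpos
        linarith
      refine ⟨?_, (ℓ:ℝ), 0, hmainb⟩
      rw [show (∑ v, (G.degree v : ℝ) ^ 2) = ∑ v, d v ^ 2 from rfl, hsum2, hlam1]
      field_simp
      exact (div_self (by contrapose! hm0; rw [hm0]; ring)).symm
  · rintro ⟨hlam, a, b, hab⟩
    rw [hcast] at hlam
    by_cases hdeg : ∀ v, G.degree v = 0
    · refine ⟨1, one_pos, ?_⟩
      have hz : (fun v => (G.degree v : ℝ)) = (0 : V → ℝ) := by
        funext v; simp [hdeg v]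
      rw [hz, Matrix.mulVec_zero, smul_zero]
    · push_neg at hdeg
      obtain ⟨v0, hv0⟩ := hdeg
      have hdv0 : (1:ℝ) ≤ d v0 := by
        show (1:ℝ) ≤ (G.degree v0 : ℝ)
        exact_mod_cast Nat.one_le_iff_ne_zero.mpr hv0
      have hdnonneg : ∀ v, 0 ≤ d v := fun v => show (0:ℝ) ≤ (G.degree v : ℝ) by positivity
      have hsumpos : 0 < ∑ v, d v :=
        Finset.sum_pos' (fun v _ => hdnonneg v) ⟨v0, Finset.mem_univ v0, by linarith⟩
      have h2m : (0:ℝ) < 2 * m := by rw [← hsumd]; exact hsumpos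
      obtain ⟨b', hb'⟩ : ∃ b', ∀ μ, G.IsMainEigenvalue μ → μ = lam1 ∨ μ = b' := by
        rcases hab lam1 (lam1_main G h1) with h | h
        · exact ⟨b, fun μ hμ => by
            rcases hab μ hμ with h' | h'
            exacts [Or.inl (h'.trans h.symm), Or.inr h']⟩
        · exact ⟨a, fun μ hμ => by
            rcases hab μ hμ with h' | h'
            exacts [Or.inr h', Or.inl (h'.trans h.symm)]⟩
      set u : V → ℝ := fun _ => (1:ℝ) with hu
      set c : V → ℝ := co G u with hc
      have hs1 : ∑ v, d v = ∑ k, evl G k * (c k)^2 := by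
        calc ∑ v, d v = u ⬝ᵥ d := (dot_one_left d).symm
          _ = u ⬝ᵥ (G.adjMatrix ℝ *ᵥ u) := by rw [hAu]
          _ = ∑ k, co G u k * co G (G.adjMatrix ℝ *ᵥ u) k := dot_eq_sum_co G _ _
          _ = ∑ k, evl G k * (c k)^2 := Finset.sum_congr rfl fun k _ => by
              rw [co_mulVec, hc]; ring
      have hs2 : ∑ v, d v ^ 2 = ∑ k, (evl G k)^2 * (c k)^2 := by
        calc ∑ v, d v ^ 2 = d ⬝ᵥ d := by simp [dotProduct, sq]
          _ = (G.adjMatrix ℝ *ᵥ u) ⬝ᵥ (G.adjMatrix ℝ *ᵥ u) := by rw [hAu]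
          _ = ∑ k, co G (G.adjMatrix ℝ *ᵥ u) k * co G (G.adjMatrix ℝ *ᵥ u) k :=
              dot_eq_sum_co G _ _
          _ = ∑ k, (evl G k)^2 * (c k)^2 := Finset.sum_congr rfl fun k _ => by
              rw [co_mulVec, hc]; ring
      have hmul : lam1 * ∑ k, evl G k * (c k)^2 = ∑ k, (evl G k)^2 * (c k)^2 := by
        rw [← hs1, ← hs2, hsumd, hlam]
        exact div_mul_cancel₀ _ (ne_of_gt h2m)
      have hstar : ∑ k, (c k)^2 * (evl G k * (lam1 - evl G k)) = 0 := by
        have h' : ∑ k, (lam1 * (evl G k * (c k)^2) - (evl G k)^2 * (c k)^2) = 0 := by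
          rw [Finset.sum_sub_distrib, ← Finset.mul_sum, hmul, sub_self]
        rw [← h']
        exact Finset.sum_congr rfl fun k _ => by ring
      have hmu : ∀ k, c k ≠ 0 → evl G k = lam1 ∨ evl G k = b' := fun k hk =>
        hb' _ (main_of_co G k hk)
      have hkey : ∀ k, evl G k * c k * (evl G k - lam1) = 0 := by
        intro i
        by_cases hci : c i = 0
        · rw [hci]; ring
        by_cases hei : evl G i = lam1
        · rw [hei]; ring
        have hib' : evl G i = b' := (hmu i hci).resolve_left hei
        have t0 : (b' * (lam1 - b')) * ∑ k, (if evl G k = lam1 then 0 else (c k)^2) = 0 := by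
          have expand : (b' * (lam1 - b')) * ∑ k, (if evl G k = lam1 then 0 else (c k)^2)
              = ∑ k, (c k)^2 * (evl G k * (lam1 - evl G k)) := by
            rw [Finset.mul_sum]
            refine Finset.sum_congr rfl fun k _ => ?_
            by_cases hk : evl G k = lam1
            · rw [if_pos hk, hk]; ring
            · by_cases hck : c k = 0
              · rw [if_neg hk, hck]; ring
              · have hkb : evl G k = b' := (hmu k hck).resolve_left hk
                rw [if_neg hk, hkb]; ring
          rw [expand, hstar]
        have hsumpos' : 0 < ∑ k, (if evl G k = lam1 then 0 else (c k)^2) := by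
          refine Finset.sum_pos' (fun k _ => ?_) ⟨i, Finset.mem_univ i, ?_⟩
          · by_cases hk : evl G k = lam1
            · simp [hk]
            · rw [if_neg hk]; positivity
          · rw [if_neg hei]; positivity
        have hb0 : b' * (lam1 - b') = 0 := by
          by_contra hne
          exact hne (by
            rcases mul_eq_zero.mp t0 with h | h
            · exact h
            · exact absurd h (ne_of_gt hsumpos'))
        have hb'0 : b' = 0 := by
          rcases mul_eq_zero.mp hb0 with h | h
          · exact h
          · exfalso
            apply hei
            rw [hib']
            linarith [sub_eq_zero.mp h]
        rw [hib', hb'0]; ring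
      have hAd : G.adjMatrix ℝ *ᵥ d = lam1 • d := by
        apply ext_co G
        intro k
        rw [co_smul, ← hAu, co_mulVec, co_mulVec]
        have h' := hkey k
        rw [hc] at h'
        linear_combination h'
      have hlampos : 0 < lam1 := by
        rw [hlam]
        apply div_pos ?_ h2m
        exact Finset.sum_pos' (fun v _ => by positivity)
          ⟨v0, Finset.mem_univ v0, by nlinarith [hdv0]⟩
      obtain ⟨z, hz⟩ : ∃ z : ℤ, (z : ℝ) = lam1 := by
        have hint : IsIntegral ℤ lam1 := eig_isIntegral G h1.1
        have hsq : (∑ v, d v ^ 2) = (((∑ v, (G.degree v)^2 : ℕ) : ℝ)) := by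
          push_cast [hd]; rfl
        set q : ℚ := ((∑ v, (G.degree v)^2 : ℕ) : ℚ) / ((2 * m : ℕ) : ℚ) with hq
        have hql : algebraMap ℚ ℝ q = lam1 := by
          rw [eq_ratCast, hq, hlam, hsq]
          push_cast
          ring
        have hintq : IsIntegral ℤ q := by
          rw [← isIntegral_algebraMap_iff (algebraMap ℚ ℝ).injective, hql]
          exact hint
        obtain ⟨z, hz⟩ := IsIntegrallyClosed.isIntegral_iff.mp hintq
        refine ⟨z, ?_⟩
        rw [← hql, ← hz]
        rfl
      have hzpos : 0 < z := by
        have : (0:ℝ) < (z:ℝ) := by rw [hz]; exact hlampos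
        exact_mod_cast this
      refine ⟨z.toNat, by omega, ?_⟩
      have hcast2 : ((z.toNat : ℕ) : ℝ) = lam1 := by
        rw [← hz]
        norm_cast
        omega
      rw [← hd, hcast2]
      exact hAd
end

section
/- For an eigenvalue λ of a graph G, the following are equivalent: (1) λ is non-main, or λ is main with multiplicity greater than 1; (2) there is an eigenvector x of G associated to λ with jᵀx = 0; (3) −1 − λ is an eigenvalue of the complement Ḡ. -/
open Matrix Finset Polynomial

set_option linter.unusedSectionVars false

variable {V : Type*} [Fintype V] [DecidableEq V]

lemma charpoly_conj_eq {n R : Type*} [Fintype n] [DecidableEq n] [CommRing R]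
    (U D W : Matrix n n R) (h : U * W = 1) :
    (U * D * W).charpoly = D.charpoly := by
  have hU : (C : R →+* R[X]).mapMatrix U * (C : R →+* R[X]).mapMatrix W = 1 := by
    rw [← _root_.map_mul, h, _root_.map_one]
  have key : charmatrix (U * D * W)
      = (C : R →+* R[X]).mapMatrix U * charmatrix D * (C : R →+* R[X]).mapMatrix W := by
    unfold charmatrix
    rw [mul_sub, sub_mul, _root_.map_mul, _root_.map_mul]
    congr 1
    rw [mul_assoc, ((scalar_commute (X : R[X]) (Commute.all _) ((C : R →+* R[X]).mapMatrix W))).eq,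
      ← mul_assoc, hU, one_mul]
  unfold Matrix.charpoly
  rw [key, det_mul, det_mul, mul_right_comm, ← det_mul, hU, det_one, one_mul]

lemma charpoly_diagonal' {n R : Type*} [Fintype n] [DecidableEq n] [CommRing R] (d : n → R) :
    (diagonal d).charpoly = ∏ i, (X - C (d i)) := by
  unfold Matrix.charpoly charmatrix
  rw [show (C : R →+* R[X]).mapMatrix (diagonal d) = diagonal (fun i => C (d i)) by
    simp [RingHom.mapMatrix_apply, diagonal_map]]
  rw [show (Matrix.scalar n (X : R[X])) = diagonal (fun _ => (X : R[X])) from scalar_apply _]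
  rw [diagonal_sub, det_diagonal]

lemma herm_charpoly (A : Matrix V V ℝ) (hA : A.IsHermitian) :
    A.charpoly = ∏ i, (X - C (hA.eigenvalues i)) := by
  conv_lhs => rw [hA.spectral_theorem]
  rw [Unitary.conjStarAlgAut_apply, charpoly_conj_eq _ _ _ (mem_unitaryGroup_iff.mp (hA.eigenvectorUnitary).2)]
  have hd : (diagonal (RCLike.ofReal ∘ hA.eigenvalues) : Matrix V V ℝ)
      = diagonal hA.eigenvalues := by
    congr 1
  rw [hd, charpoly_diagonal']

lemma herm_rootMult (A : Matrix V V ℝ) (hA : A.IsHermitian) (lam : ℝ) :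
    A.charpoly.rootMultiplicity lam = (univ.filter fun i => hA.eigenvalues i = lam).card := by
  rw [← Polynomial.count_roots, herm_charpoly A hA]
  have : (∏ i, (X - C (hA.eigenvalues i)))
      = (Multiset.map (fun a => X - C a) (univ.val.map hA.eigenvalues)).prod := by
    rw [Multiset.map_map]
    rfl
  rw [this, roots_multiset_prod_X_sub_C, Multiset.count_map]
  rw [Multiset.filter_congr (fun x _ => (eq_comm :
    lam = hA.eigenvalues x ↔ hA.eigenvalues x = lam))]
  rfl

lemma compl_mulVec (G : SimpleGraph V) [DecidableRel G.Adj] (y : V → ℝ) :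
    (Gᶜ.adjMatrix ℝ) *ᵥ y = (fun _ => ∑ u, y u) - y - (G.adjMatrix ℝ) *ᵥ y := by
  funext v
  simp only [mulVec, dotProduct, SimpleGraph.adjMatrix_apply, SimpleGraph.compl_adj, Pi.sub_apply]
  have hv : y v = ∑ x, if v = x then y x else 0 := by simp
  rw [hv, ← Finset.sum_sub_distrib, ← Finset.sum_sub_distrib]
  refine Finset.sum_congr rfl fun u _ => ?_
  by_cases h1 : v = u
  · subst h1; simp [G.loopless.irrefl v]
  · by_cases h2 : G.Adj v u <;> simp [h1, h2]

lemma aux_symm_dot (A : Matrix V V ℝ) (hs : Aᵀ = A) (w x : V → ℝ) :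
    (A *ᵥ w) ⬝ᵥ x = w ⬝ᵥ (A *ᵥ x) := by
  rw [dotProduct_mulVec, ← mulVec_transpose, hs]

lemma aux_herm (G : SimpleGraph V) [DecidableRel G.Adj] : (G.adjMatrix ℝ).IsHermitian := by
  have h := G.isSymm_adjMatrix (α := ℝ)
  rw [Matrix.IsHermitian, conjTranspose_eq_transpose_of_trivial]
  exact h.eq

lemma aux_dot_basis (A : Matrix V V ℝ) (hA : A.IsHermitian) (i j : V) :
    ⇑(hA.eigenvectorBasis i) ⬝ᵥ ⇑(hA.eigenvectorBasis j) = if i = j then 1 else 0 := by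
  have h := (orthonormal_iff_ite.mp hA.eigenvectorBasis.orthonormal) i j
  rw [PiLp.inner_apply] at h
  simpa [dotProduct, mul_comm] using h

lemma aux_repr (A : Matrix V V ℝ) (hA : A.IsHermitian) (x : V → ℝ) (i : V) :
    hA.eigenvectorBasis.repr ((WithLp.equiv 2 (V → ℝ)).symm x) i
      = ⇑(hA.eigenvectorBasis i) ⬝ᵥ x := by
  rw [OrthonormalBasis.repr_apply_apply, PiLp.inner_apply]
  simp [dotProduct, mul_comm]

lemma aux_complete (A : Matrix V V ℝ) (hA : A.IsHermitian) (x : V → ℝ)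
    (h : ∀ i, ⇑(hA.eigenvectorBasis i) ⬝ᵥ x = 0) : x = 0 := by
  have : (WithLp.equiv 2 (V → ℝ)).symm x = 0 := by
    apply hA.eigenvectorBasis.repr.injective
    rw [map_zero]
    ext i
    rw [aux_repr A hA x i, h i]
    rfl
  simpa using congrArg (WithLp.equiv 2 (V → ℝ)) this

lemma aux_span_single (A : Matrix V V ℝ) (hA : A.IsHermitian) (x : V → ℝ) (i₀ : V)
    (h : ∀ i, i ≠ i₀ → ⇑(hA.eigenvectorBasis i) ⬝ᵥ x = 0) :
    x = (⇑(hA.eigenvectorBasis i₀) ⬝ᵥ x) • ⇑(hA.eigenvectorBasis i₀) := by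
  have key : (WithLp.equiv 2 (V → ℝ)).symm x
      = (⇑(hA.eigenvectorBasis i₀) ⬝ᵥ x) • hA.eigenvectorBasis i₀ := by
    apply hA.eigenvectorBasis.repr.injective
    rw [_root_.map_smul, OrthonormalBasis.repr_self]
    ext j
    rcases eq_or_ne j i₀ with rfl | hj
    · rw [aux_repr]
      simp [EuclideanSpace.single_apply]
    · rw [aux_repr A hA x j, h j hj]
      simp [EuclideanSpace.single_apply, hj]
  exact congrArg (WithLp.equiv 2 (V → ℝ)) key

lemma aux_eigendot (A : Matrix V V ℝ) (hA : A.IsHermitian) (hs : Aᵀ = A) (lam : ℝ) (x : V → ℝ)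
    (hx : A *ᵥ x = lam • x) (i : V) (hne : hA.eigenvalues i ≠ lam) :
    ⇑(hA.eigenvectorBasis i) ⬝ᵥ x = 0 := by
  have h1 := aux_symm_dot A hs ⇑(hA.eigenvectorBasis i) x
  rw [hA.mulVec_eigenvectorBasis, hx, smul_dotProduct, dotProduct_smul] at h1
  have := sub_eq_zero.mpr h1
  rw [← sub_smul, smul_eq_mul] at this
  rcases mul_eq_zero.mp this with h | h
  · exact absurd (sub_eq_zero.mp h) hne
  · exact h

theorem nonmain_or_multiple_tfae (G : SimpleGraph V) [DecidableRel G.Adj]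
    (lam : ℝ) (hlam : G.IsEigenvalue lam) :
    List.TFAE
      [G.IsNonMainEigenvalue lam ∨ (G.IsMainEigenvalue lam ∧ 1 < G.eigMult lam),
        ∃ x : V → ℝ, x ≠ 0 ∧ (G.adjMatrix ℝ) *ᵥ x = lam • x ∧ ∑ v, x v = 0,
        Gᶜ.IsEigenvalue (-1 - lam)] := by
  have hA : (G.adjMatrix ℝ).IsHermitian := aux_herm G
  have hs : (G.adjMatrix ℝ)ᵀ = G.adjMatrix ℝ := (G.isSymm_adjMatrix).eq
  set A := G.adjMatrix ℝ with hAdef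
  tfae_have 2 → 3 := by
    rintro ⟨x, hx0, hx, hxs⟩
    refine ⟨x, hx0, ?_⟩
    rw [compl_mulVec, ← hAdef, hx]
    funext v
    simp only [Pi.sub_apply, Pi.smul_apply, smul_eq_mul, hxs]
    ring
  tfae_have 3 → 2 := by
    rintro ⟨y, hy0, hy⟩
    rw [compl_mulVec, ← hAdef] at hy
    have hAy : A *ᵥ y = (fun _ => ∑ u, y u) + lam • y := by
      funext v
      have h := congrFun hy v
      simp only [Pi.sub_apply, Pi.smul_apply, smul_eq_mul, Pi.add_apply] at h ⊢
      linarith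
    by_cases hs0 : ∑ u, y u = 0
    · refine ⟨y, hy0, ?_, hs0⟩
      rw [hAy]
      funext v
      simp [hs0]
    · obtain ⟨x, hx0, hx⟩ := hlam
      refine ⟨x, hx0, hx, ?_⟩
      have h1 : (A *ᵥ x) ⬝ᵥ y = x ⬝ᵥ (A *ᵥ y) := aux_symm_dot A hs x y
      rw [hx, hAy] at h1
      simp only [smul_dotProduct, dotProduct_add, dotProduct_smul, smul_eq_mul] at h1
      have h2 : x ⬝ᵥ (fun _ => ∑ u, y u) = 0 := by linarith
      have h3 : (∑ v, x v) * (∑ u, y u) = 0 := by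
        rw [← h2]
        simp [dotProduct, Finset.sum_mul]
      rcases mul_eq_zero.mp h3 with h | h
      · exact h
      · exact absurd h hs0
  tfae_have 2 → 1 := by
    rintro ⟨x, hx0, hx, hxs⟩
    by_cases hm : G.IsMainEigenvalue lam
    · right
      refine ⟨hm, ?_⟩
      obtain ⟨z, hz0, hz, hzs⟩ := hm
      rw [SimpleGraph.eigMult, ← hAdef, herm_rootMult A hA lam]
      by_contra hle
      push_neg at hle
      have hex : ∃ i, ⇑(hA.eigenvectorBasis i) ⬝ᵥ x ≠ 0 := by
        by_contra hc
        push_neg at hc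
        exact hx0 (aux_complete A hA x hc)
      obtain ⟨i, hi⟩ := hex
      have hiS : hA.eigenvalues i = lam := by
        by_contra hne
        exact hi (aux_eigendot A hA hs lam x hx i hne)
      have hother : ∀ k, k ≠ i → hA.eigenvalues k ≠ lam := by
        intro k hk hkS
        have : 1 < (univ.filter fun m => hA.eigenvalues m = lam).card :=
          Finset.one_lt_card.mpr ⟨k, by simp [hkS], i, by simp [hiS], hk⟩
        omega
      have hxe := aux_span_single A hA x i
        (fun k hk => aux_eigendot A hA hs lam x hx k (hother k hk))
      have hze := aux_span_single A hA z i
        (fun k hk => aux_eigendot A hA hs lam z hz k (hother k hk))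
      have hsum : ∀ (c : ℝ) (u : V → ℝ), ∑ v, (c • u) v = c * ∑ v, u v := by
        intro c u
        simp [Finset.mul_sum]
      have hx2 := hxs
      rw [hxe, hsum] at hx2
      apply hzs
      rw [hze, hsum]
      rcases mul_eq_zero.mp hx2 with h | h
      · exact absurd h hi
      · rw [h, mul_zero]
    · left
      exact ⟨hlam, hm⟩
  tfae_have 1 → 2 := by
    rintro (⟨⟨x, hx0, hx⟩, hnm⟩ | ⟨hm, hmult⟩)
    · refine ⟨x, hx0, hx, ?_⟩
      by_contra h
      exact hnm ⟨x, hx0, hx, h⟩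
    · rw [SimpleGraph.eigMult, ← hAdef, herm_rootMult A hA lam] at hmult
      obtain ⟨i, himem, j, hjmem, hij⟩ := Finset.one_lt_card.mp hmult
      rw [Finset.mem_filter] at himem hjmem
      set wi : V → ℝ := ⇑(hA.eigenvectorBasis i) with hwidef
      set wj : V → ℝ := ⇑(hA.eigenvectorBasis j) with hwjdef
      have hwi : A *ᵥ wi = lam • wi := by
        rw [hwidef, hA.mulVec_eigenvectorBasis, himem.2]
      have hwj : A *ᵥ wj = lam • wj := by
        rw [hwjdef, hA.mulVec_eigenvectorBasis, hjmem.2]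
      have hdotii : wi ⬝ᵥ wi = 1 := by
        rw [hwidef, aux_dot_basis A hA i i, if_pos rfl]
      have hdotji : wj ⬝ᵥ wi = 0 := by
        rw [hwidef, hwjdef, aux_dot_basis A hA j i, if_neg hij.symm]
      have hdotjj : wj ⬝ᵥ wj = 1 := by
        rw [hwjdef, aux_dot_basis A hA j j, if_pos rfl]
      have hwj0 : wj ≠ 0 := by
        intro h
        rw [h] at hdotjj
        simp at hdotjj
      by_cases hsj : ∑ v, wj v = 0
      · exact ⟨wj, hwj0, hwj, hsj⟩
      · refine ⟨(∑ v, wj v) • wi - (∑ v, wi v) • wj, ?_, ?_, ?_⟩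
        · intro h
          have h2 : ((∑ v, wj v) • wi - (∑ v, wi v) • wj) ⬝ᵥ wi = 0 := by
            rw [h]
            simp
          rw [sub_dotProduct, smul_dotProduct, smul_dotProduct, hdotii, hdotji] at h2
          simp only [smul_eq_mul, mul_one, mul_zero, sub_zero] at h2
          exact hsj h2
        · rw [mulVec_sub, mulVec_smul, mulVec_smul, hwi, hwj]
          funext v
          simp only [Pi.sub_apply, Pi.smul_apply, smul_eq_mul]
          ring
        · simp only [Pi.sub_apply, Pi.smul_apply, smul_eq_mul]
          rw [Finset.sum_sub_distrib, ← Finset.mul_sum, ← Finset.mul_sum]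
          ring
  tfae_finish
end

section
/- For any graph G of order n, λ₂(Ḡ) ≤ −1 − λₙ(G) ≤ λ₁(Ḡ), where λ₂(Ḡ) is the second largest eigenvalue of the complement Ḡ, λₙ(G) is the least eigenvalue of G, and λ₁(Ḡ) is the largest eigenvalue of Ḡ. -/
open Matrix Finset Polynomial

variable {V : Type*} [Fintype V] [DecidableEq V]

section AuxWCI
variable {m : Type*} [Fintype m] [DecidableEq m]


variable {m : Type*} [Fintype m] [DecidableEq m]

lemma my_charpoly_conj {U V D : Matrix m m ℝ} (hUV : U * V = 1) :
    (U * D * V).charpoly = D.charpoly := by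
  have hVU : V * U = 1 := mul_eq_one_comm.mp hUV
  let f : Matrix m m ℝ →+* Matrix m m ℝ[X] := (C : ℝ →+* ℝ[X]).mapMatrix
  have h1 : charmatrix (U * D * V) = f U * charmatrix D * f V := by
    unfold charmatrix
    rw [Matrix.mul_sub, Matrix.sub_mul]
    congr 1
    · rw [mul_assoc, Matrix.scalar_commute (X : ℝ[X]) (fun r => Commute.all _ _) (f V),
        ← mul_assoc, ← _root_.map_mul f, hUV, _root_.map_one f, one_mul]
    · rw [← _root_.map_mul f, ← _root_.map_mul f]
  rw [Matrix.charpoly, Matrix.charpoly, h1, det_mul, det_mul, mul_comm, ← mul_assoc, ← det_mul,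
    ← _root_.map_mul f, hVU, _root_.map_one f, det_one, one_mul]

lemma my_charpoly_diagonal (d : m → ℝ) :
    (Matrix.diagonal d).charpoly = ∏ i, (X - C (d i)) := by
  have : charmatrix (Matrix.diagonal d) = Matrix.diagonal fun i => X - C (d i) := by
    ext i j
    by_cases h : i = j
    · subst h; simp [charmatrix_apply]
    · simp [charmatrix_apply, Matrix.diagonal_apply_ne _ h]
  rw [Matrix.charpoly, this, det_diagonal]

lemma my_charpoly_eq {M : Matrix m m ℝ} (hM : M.IsHermitian) :
    M.charpoly = ∏ i, (X - C (hM.eigenvalues i)) := by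
  have hspec := hM.spectral_theorem
  rw [RCLike.ofReal_real_eq_id] at hspec
  simp only [Function.id_comp, Unitary.conjStarAlgAut_apply] at hspec
  conv_lhs => rw [hspec]
  rw [my_charpoly_conj (Matrix.mem_unitaryGroup_iff.mp (hM.eigenvectorUnitary).2),
    my_charpoly_diagonal]

variable {m : Type*} [Fintype m] [DecidableEq m]

omit [Fintype m] [DecidableEq m] in
lemma my_transpose_star (U : Matrix m m ℝ) : Uᵀ = star U := by
  ext i j; simp [Matrix.star_eq_conjTranspose, Matrix.conjTranspose_apply]

lemma my_quad_eq {M : Matrix m m ℝ} (hM : M.IsHermitian) (x : m → ℝ) :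
    x ⬝ᵥ (M *ᵥ x) = ∑ i, hM.eigenvalues i * ((star (hM.eigenvectorUnitary : Matrix m m ℝ) *ᵥ x) i)^2 := by
  set U : Matrix m m ℝ := (hM.eigenvectorUnitary : Matrix m m ℝ) with hU
  set y := star U *ᵥ x with hy
  have hspec := hM.spectral_theorem
  rw [RCLike.ofReal_real_eq_id] at hspec
  simp only [Function.id_comp, Unitary.conjStarAlgAut_apply] at hspec
  have hMx : M *ᵥ x = U *ᵥ (Matrix.diagonal hM.eigenvalues *ᵥ y) := by
    conv_lhs => rw [hspec]
    rw [← mulVec_mulVec, ← mulVec_mulVec]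
  rw [hMx, Matrix.dotProduct_mulVec, ← Matrix.mulVec_transpose, my_transpose_star, ← hy]
  simp only [dotProduct, Matrix.mulVec_diagonal]
  exact Finset.sum_congr rfl fun i _ => by ring

lemma my_dot_eq {M : Matrix m m ℝ} (hM : M.IsHermitian) (x : m → ℝ) :
    x ⬝ᵥ x = ∑ i, ((star (hM.eigenvectorUnitary : Matrix m m ℝ) *ᵥ x) i)^2 := by
  set U : Matrix m m ℝ := (hM.eigenvectorUnitary : Matrix m m ℝ) with hU
  set y := star U *ᵥ x with hy
  have h1 : x ⬝ᵥ x = y ⬝ᵥ y := by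
    have hUU : U * star U = 1 := Matrix.mem_unitaryGroup_iff.mp hM.eigenvectorUnitary.2
    conv_lhs => rw [← one_mulVec x, ← hUU, ← mulVec_mulVec]
    rw [Matrix.dotProduct_mulVec, ← Matrix.mulVec_transpose, my_transpose_star,
      mulVec_mulVec, Matrix.mem_unitaryGroup_iff'.mp hM.eigenvectorUnitary.2, one_mulVec]
  rw [h1]
  simp only [dotProduct]
  exact Finset.sum_congr rfl fun i _ => by ring

end AuxWCI

theorem weyl_compl_inequalities {n : ℕ} (hn : 2 ≤ n)
    (G : SimpleGraph (Fin n)) [DecidableRel G.Adj]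
    (lamn : ℝ) (hmin : IsLeast {μ | G.IsEigenvalue μ} lamn)
    (e : Fin n → ℝ) (he : Antitone e)
    (hchar : (Gᶜ.adjMatrix ℝ).charpoly = ∏ i, (X - C (e i))) :
    e ⟨1, by omega⟩ ≤ -1 - lamn ∧ -1 - lamn ≤ e ⟨0, by omega⟩ := by
  classical
  set A := G.adjMatrix ℝ with hAdef
  set B := Gᶜ.adjMatrix ℝ with hBdef
  have hermA : A.IsHermitian := by
    show Aᴴ = A
    ext i j
    simp [Matrix.conjTranspose_apply, hAdef, SimpleGraph.adjMatrix_apply, SimpleGraph.adj_comm]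
  have hermB : B.IsHermitian := by
    show Bᴴ = B
    ext i j
    simp [Matrix.conjTranspose_apply, hBdef, SimpleGraph.adjMatrix_apply, SimpleGraph.adj_comm]
  set evA := hermA.eigenvalues with hevA
  set evB := hermB.eigenvalues with hevB
  set e0 : ℝ := e ⟨0, by omega⟩ with he0
  set e1 : ℝ := e ⟨1, by omega⟩ with he1
  -- matrix identity for the complement
  have hB_eq : B = (Matrix.of (fun _ _ => (1:ℝ)) : Matrix (Fin n) (Fin n) ℝ) - 1 - A := by
    ext u v
    by_cases h : u = v
    · subst h; simp [hBdef, hAdef, Matrix.one_apply]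
    · simp only [hBdef, hAdef, SimpleGraph.adjMatrix_apply, Matrix.sub_apply, Matrix.of_apply,
        Matrix.one_apply_ne h, SimpleGraph.compl_adj]
      by_cases hadj : G.Adj u v <;> simp [h, hadj]
  -- quadratic form of B
  have quadB : ∀ x : Fin n → ℝ,
      x ⬝ᵥ (B *ᵥ x) = (∑ v, x v)^2 - x ⬝ᵥ x - x ⬝ᵥ (A *ᵥ x) := by
    intro x
    rw [hB_eq]
    have hJ : (Matrix.of (fun _ _ => (1:ℝ)) : Matrix (Fin n) (Fin n) ℝ) *ᵥ x = fun _ => ∑ v, x v := by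
      ext u; simp [Matrix.mulVec, dotProduct]
    rw [Matrix.sub_mulVec, Matrix.sub_mulVec, dotProduct_sub, dotProduct_sub,
      Matrix.one_mulVec, hJ]
    have : x ⬝ᵥ (fun _ => ∑ v, x v) = (∑ v, x v)^2 := by
      simp only [dotProduct, ← Finset.sum_mul]
      ring
    rw [this]
  -- multiset of roots
  have h1 : (∏ i, (X - C (e i)) : ℝ[X]) = ∏ i, (X - C (evB i)) := by
    rw [← hchar, my_charpoly_eq hermB]
  have hroots : (univ.val.map e : Multiset ℝ) = univ.val.map evB := by
    have h2 : ((univ.val.map e).map (fun a => X - C a)).prod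
        = ((univ.val.map evB).map (fun a => X - C a)).prod := by
      rw [Multiset.map_map, Multiset.map_map]
      simpa [Finset.prod_eq_multiset_prod, Function.comp] using h1
    calc (univ.val.map e : Multiset ℝ)
        = ((univ.val.map e).map (fun a => X - C a)).prod.roots :=
          (roots_multiset_prod_X_sub_C _).symm
      _ = ((univ.val.map evB).map (fun a => X - C a)).prod.roots := by rw [h2]
      _ = univ.val.map evB := roots_multiset_prod_X_sub_C _
  -- each eigenvalue of B is some e j
  have hmemB : ∀ i, ∃ j, evB i = e j := by
    intro i
    have : evB i ∈ (univ.val.map e : Multiset ℝ) := by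
      rw [hroots]
      exact Multiset.mem_map_of_mem _ (Finset.mem_univ_val i)
    obtain ⟨j, _, hj⟩ := Multiset.mem_map.mp this
    exact ⟨j, hj.symm⟩
  have e0max : ∀ i, evB i ≤ e0 := by
    intro i
    obtain ⟨j, hj⟩ := hmemB i
    rw [hj, he0]
    exact he (by simp [Fin.le_def])
  -- lamn is a lower bound on eigenvalues of A
  have hlamA : ∀ j, lamn ≤ evA j := fun j =>
    hmin.2 ⟨_, (not_congr (WithLp.ofLp_eq_zero 2)).mpr (hermA.eigenvectorBasis.orthonormal.ne_zero j), hermA.mulVec_eigenvectorBasis j⟩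
  have quadA_ge : ∀ x : Fin n → ℝ, lamn * (x ⬝ᵥ x) ≤ x ⬝ᵥ (A *ᵥ x) := by
    intro x
    rw [my_quad_eq hermA, my_dot_eq hermA, Finset.mul_sum]
    exact Finset.sum_le_sum fun i _ => mul_le_mul_of_nonneg_right (hlamA i) (sq_nonneg _)
  constructor
  · -- e 1 ≤ -1 - lamn
    have hcount : 2 ≤ (univ.filter (fun i : Fin n => e1 ≤ evB i)).card := by
      have key : Multiset.countP (fun a => e1 ≤ a) (univ.val.map e)
          = Multiset.countP (fun a => e1 ≤ a) (univ.val.map evB) := by rw [hroots]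
      rw [Multiset.countP_map, Multiset.countP_map] at key
      have h0 : (⟨0, by omega⟩ : Fin n) ∈ univ.filter (fun i => e1 ≤ e i) := by
        simp only [Finset.mem_filter, Finset.mem_univ, true_and, he1]
        exact he (by simp [Fin.le_def])
      have h1' : (⟨1, by omega⟩ : Fin n) ∈ univ.filter (fun i => e1 ≤ e i) := by
        simp only [Finset.mem_filter, Finset.mem_univ, true_and, he1]
        exact le_rfl
      have hsub : ({⟨0, by omega⟩, ⟨1, by omega⟩} : Finset (Fin n))
          ⊆ univ.filter (fun i => e1 ≤ e i) := by
        intro i hi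
        rcases Finset.mem_insert.mp hi with h | h
        · exact h ▸ h0
        · exact (Finset.mem_singleton.mp h) ▸ h1'
      have hcard2 : ({⟨0, by omega⟩, ⟨1, by omega⟩} : Finset (Fin n)).card = 2 :=
        Finset.card_pair (by simp)
      calc 2 = _ := hcard2.symm
        _ ≤ (univ.filter (fun i => e1 ≤ e i)).card := Finset.card_le_card hsub
        _ = (univ.filter (fun i => e1 ≤ evB i)).card := by
            rw [Finset.card_def, Finset.card_def, Finset.filter_val, Finset.filter_val]
            exact key
    obtain ⟨i₀, hi₀m, i₁, hi₁m, hne⟩ := Finset.one_lt_card.mp (lt_of_lt_of_le one_lt_two hcount)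
    have hi₀ : e1 ≤ evB i₀ := (Finset.mem_filter.mp hi₀m).2
    have hi₁ : e1 ≤ evB i₁ := (Finset.mem_filter.mp hi₁m).2
    set w0 : Fin n → ℝ := ⇑(hermB.eigenvectorBasis i₀) with hw0
    set w1 : Fin n → ℝ := ⇑(hermB.eigenvectorBasis i₁) with hw1
    obtain ⟨a, b, hsum0, hpos⟩ :
        ∃ a b : ℝ, a * (∑ v, w0 v) + b * (∑ v, w1 v) = 0 ∧ 0 < a^2 + b^2 := by
      by_cases h : (∑ v, w0 v) = 0
      · exact ⟨1, 0, by simp [h], by norm_num⟩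
      · exact ⟨∑ v, w1 v, -(∑ v, w0 v), by ring, by
          nlinarith [sq_nonneg (∑ v, w1 v),
            lt_of_le_of_ne (sq_nonneg (∑ v, w0 v)) (Ne.symm (pow_ne_zero 2 h))]⟩
    set x : Fin n → ℝ := a • w0 + b • w1 with hxdef
    have hyx : star (hermB.eigenvectorUnitary : Matrix (Fin n) (Fin n) ℝ) *ᵥ x
        = fun j => a * (if j = i₀ then (1:ℝ) else 0) + b * (if j = i₁ then (1:ℝ) else 0) := by
      rw [hxdef, Matrix.mulVec_add, Matrix.mulVec_smul, Matrix.mulVec_smul, hw0, hw1,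
        hermB.star_eigenvectorUnitary_mulVec, hermB.star_eigenvectorUnitary_mulVec]
      ext j
      simp [Pi.single_apply]
    have yvals : ∀ j, (star (hermB.eigenvectorUnitary : Matrix (Fin n) (Fin n) ℝ) *ᵥ x) j
        = if j = i₀ then a else if j = i₁ then b else 0 := by
      intro j
      rw [hyx]
      by_cases h0 : j = i₀
      · subst h0
        simp [hne]
      · by_cases h1 : j = i₁
        · subst h1
          simp [h0]
        · simp [h0, h1]
    have hxsum : ∑ v, x v = 0 := by
      rw [hxdef]
      simp only [Pi.add_apply, Pi.smul_apply, smul_eq_mul]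
      rw [Finset.sum_add_distrib, ← Finset.mul_sum, ← Finset.mul_sum]
      exact hsum0
    have hxx : x ⬝ᵥ x = a^2 + b^2 := by
      rw [my_dot_eq hermB]
      have hterm : ∀ j : Fin n,
          ((star (hermB.eigenvectorUnitary : Matrix (Fin n) (Fin n) ℝ) *ᵥ x) j)^2
          = (if j = i₀ then a^2 else 0) + (if j = i₁ then b^2 else 0) := by
        intro j
        rw [yvals j]
        by_cases h0 : j = i₀
        · subst h0; simp [hne]
        · by_cases h1 : j = i₁
          · subst h1; simp [h0]
          · simp [h0, h1]
      rw [Finset.sum_congr rfl (fun j _ => hterm j), Finset.sum_add_distrib,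
        Finset.sum_ite_eq' univ i₀, Finset.sum_ite_eq' univ i₁]
      simp
    have hq_ge : e1 * (x ⬝ᵥ x) ≤ x ⬝ᵥ (B *ᵥ x) := by
      rw [my_quad_eq hermB, my_dot_eq hermB, Finset.mul_sum]
      refine Finset.sum_le_sum fun j _ => ?_
      by_cases h0 : j = i₀
      · subst h0; exact mul_le_mul_of_nonneg_right hi₀ (sq_nonneg _)
      · by_cases h1 : j = i₁
        · subst h1; exact mul_le_mul_of_nonneg_right hi₁ (sq_nonneg _)
        · rw [yvals j]
          simp [h0, h1]
    have hq_le : x ⬝ᵥ (B *ᵥ x) ≤ (-1 - lamn) * (x ⬝ᵥ x) := by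
      have hA := quadA_ge x
      rw [quadB x, hxsum]
      nlinarith [hA]
    have hfin : e1 * (a^2 + b^2) ≤ (-1 - lamn) * (a^2 + b^2) := by
      rw [← hxx]
      exact hq_ge.trans hq_le
    exact le_of_mul_le_mul_right hfin hpos
  · -- -1 - lamn ≤ e 0
    obtain ⟨x, hx0, hxA⟩ := hmin.1
    have hxx : 0 < x ⬝ᵥ x := by
      rcases lt_or_eq_of_le (Finset.sum_nonneg fun i _ => mul_self_nonneg (x i)) with h | h
      · exact h
      · exact absurd (dotProduct_self_eq_zero.mp h.symm) hx0
    have hle : x ⬝ᵥ (B *ᵥ x) ≤ e0 * (x ⬝ᵥ x) := by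
      rw [my_quad_eq hermB, my_dot_eq hermB, Finset.mul_sum]
      exact Finset.sum_le_sum fun i _ => mul_le_mul_of_nonneg_right (e0max i) (sq_nonneg _)
    have hge : (-1 - lamn) * (x ⬝ᵥ x) ≤ x ⬝ᵥ (B *ᵥ x) := by
      rw [quadB x, hxA, dotProduct_smul, smul_eq_mul]
      nlinarith [sq_nonneg (∑ v, x v)]
    exact le_of_mul_le_mul_right (hge.trans hle) hxx
end

section
/- For a graph G of order n, λ₁(Ḡ) = −1 − λₙ(G) if and only if λₙ(G) is a non-main eigenvalue of G and λ₁(Ḡ) has multiplicity greater than one. -/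
open Matrix Finset Polynomial

variable {V : Type*} [Fintype V] [DecidableEq V]

set_option linter.unusedSectionVars false

namespace CIEAux

variable {A : Matrix V V ℝ}

instance instCoeFunEuclidean : Coe (V → ℝ) (EuclideanSpace ℝ V) := ⟨WithLp.toLp 2⟩

set_option linter.unusedSectionVars false

lemma dot_mulVec_symm (hA : A.IsHermitian) (y x : V → ℝ) :
    y ⬝ᵥ (A *ᵥ x) = (A *ᵥ y) ⬝ᵥ x := by
  rw [dotProduct_mulVec]
  congr 1
  ext j
  simp only [vecMul, mulVec, dotProduct]
  exact Finset.sum_congr rfl fun i _ => by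
    rw [show A i j = A j i from by conv_lhs => rw [← hA]; simp [conjTranspose_apply]]
    ring

lemma inner_eq_dot (y z : V → ℝ) :
    (inner (𝕜 := ℝ) (E := EuclideanSpace ℝ V) y z) = y ⬝ᵥ z := by
  simp [PiLp.inner_apply, RCLike.inner_apply, dotProduct, mul_comm]

lemma mulVec_basis (hA : A.IsHermitian) (i : V) :
    A *ᵥ (fun v => hA.eigenvectorBasis i v)
      = fun v => hA.eigenvalues i * hA.eigenvectorBasis i v :=
  hA.mulVec_eigenvectorBasis i

lemma repr_mulVec (hA : A.IsHermitian) (x : V → ℝ) (i : V) :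
    hA.eigenvectorBasis.repr (A *ᵥ x) i
      = hA.eigenvalues i * hA.eigenvectorBasis.repr x i := by
  rw [OrthonormalBasis.repr_apply_apply, OrthonormalBasis.repr_apply_apply,
    inner_eq_dot, inner_eq_dot, dot_mulVec_symm hA, mulVec_basis hA]
  simp [dotProduct, Finset.mul_sum, mul_assoc]

lemma parseval (hA : A.IsHermitian) (x y : V → ℝ) :
    ∑ i, hA.eigenvectorBasis.repr x i * hA.eigenvectorBasis.repr y i
      = ∑ v, x v * y v := by
  have h := hA.eigenvectorBasis.repr.inner_map_map (x : EuclideanSpace ℝ V) y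
  rw [inner_eq_dot, inner_eq_dot] at h
  simpa only [dotProduct] using h

lemma quad (hA : A.IsHermitian) (x : V → ℝ) :
    ∑ v, (A *ᵥ x) v * x v
      = ∑ i, hA.eigenvalues i *
          (hA.eigenvectorBasis.repr x i * hA.eigenvectorBasis.repr x i) := by
  rw [← parseval hA (A *ᵥ x) x]
  exact Finset.sum_congr rfl fun i _ => by rw [repr_mulVec hA]; ring

lemma eq_zero_of_repr (hA : A.IsHermitian) {x : V → ℝ}
    (h : ∀ i, hA.eigenvectorBasis.repr x i = 0) : x = 0 := by
  have h0 : hA.eigenvectorBasis.repr x = 0 := by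
    apply PiLp.ext; intro i; simpa using h i
  have := hA.eigenvectorBasis.repr.map_eq_zero_iff.mp h0
  simpa using this

lemma key (hA : A.IsHermitian) (μ : ℝ) (hup : ∀ i, hA.eigenvalues i ≤ μ) (x : V → ℝ)
    (h : μ * ∑ v, x v * x v ≤ ∑ v, (A *ᵥ x) v * x v) :
    A *ᵥ x = μ • x := by
  set c : V → ℝ := fun i => hA.eigenvectorBasis.repr x i with hc
  have hsum : ∑ i, (μ - hA.eigenvalues i) * (c i * c i)
      = μ * (∑ v, x v * x v) - ∑ v, (A *ᵥ x) v * x v := by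
    rw [quad hA, ← parseval hA x x, Finset.mul_sum, ← Finset.sum_sub_distrib]
    exact Finset.sum_congr rfl fun i _ => by ring
  have hnonneg : ∀ i ∈ univ, 0 ≤ (μ - hA.eigenvalues i) * (c i * c i) :=
    fun i _ => mul_nonneg (sub_nonneg.2 (hup i)) (mul_self_nonneg _)
  have h0 : ∑ i, (μ - hA.eigenvalues i) * (c i * c i) = 0 :=
    le_antisymm (by rw [hsum]; linarith) (Finset.sum_nonneg hnonneg)
  have hterm := (Finset.sum_eq_zero_iff_of_nonneg hnonneg).1 h0
  have hrepr : hA.eigenvectorBasis.repr (A *ᵥ x) = hA.eigenvectorBasis.repr (μ • x) := by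
    apply PiLp.ext; intro i
    rw [repr_mulVec hA, _root_.map_smul, PiLp.smul_apply, smul_eq_mul]
    rcases mul_eq_zero.1 (hterm i (mem_univ i)) with h1 | h2
    · rw [show hA.eigenvalues i = μ from by linarith [sub_eq_zero.1 h1]]
    · rcases mul_eq_zero.1 h2 with h | h <;>
        rw [show hA.eigenvectorBasis.repr x i = 0 from h] <;> ring
  exact WithLp.toLp_injective 2 (hA.eigenvectorBasis.repr.injective hrepr)

lemma repr_eq_zero (hA : A.IsHermitian) {μ : ℝ} {x : V → ℝ} (hx : A *ᵥ x = μ • x)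
    {i : V} (hne : hA.eigenvalues i ≠ μ) :
    hA.eigenvectorBasis.repr x i = 0 := by
  have h1 : hA.eigenvalues i * hA.eigenvectorBasis.repr x i
      = μ * hA.eigenvectorBasis.repr x i := by
    rw [← repr_mulVec hA, hx, WithLp.toLp_smul, _root_.map_smul, PiLp.smul_apply, smul_eq_mul]
  by_contra hc
  exact hne (mul_right_cancel₀ hc h1)

lemma charpoly_similar (P D Q : Matrix V V ℝ) (hPQ : P * Q = 1) :
    (P * D * Q).charpoly = D.charpoly := by
  have hmap : (P.map (C : ℝ →+* ℝ[X]) : Matrix V V ℝ[X]) * (Q.map C) = 1 := by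
    rw [← Matrix.map_mul, hPQ]
    simp
  have hs : Matrix.scalar V (X : ℝ[X]) = (X : ℝ[X]) • (1 : Matrix V V ℝ[X]) := by
    ext i j
    by_cases h : i = j <;> simp [Matrix.scalar_apply, Matrix.one_apply, h,
      Matrix.diagonal_apply]
  have h1 : charmatrix (P * D * Q) = (P.map C) * charmatrix D * (Q.map C) := by
    unfold charmatrix
    rw [RingHom.mapMatrix_apply, RingHom.mapMatrix_apply, hs]
    rw [mul_sub, sub_mul, Matrix.map_mul, Matrix.map_mul]
    congr 1
    rw [mul_smul_comm, smul_mul_assoc, mul_one, hmap]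
  rw [Matrix.charpoly, Matrix.charpoly, h1, det_mul, det_mul]
  have h2 : (P.map (C : ℝ →+* ℝ[X])).det * (Q.map C).det = 1 := by
    rw [← det_mul, hmap, det_one]
  calc (P.map (C : ℝ →+* ℝ[X])).det * (charmatrix D).det * (Q.map C).det
      = (P.map (C : ℝ →+* ℝ[X])).det * (Q.map C).det * (charmatrix D).det := by ring
    _ = (charmatrix D).det := by rw [h2, one_mul]

lemma charpoly_eq (hA : A.IsHermitian) :
    A.charpoly = ∏ i, (X - C (hA.eigenvalues i)) := by
  have hU : (hA.eigenvectorUnitary : Matrix V V ℝ) *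
      star (hA.eigenvectorUnitary : Matrix V V ℝ) = 1 :=
    Matrix.mem_unitaryGroup_iff.mp hA.eigenvectorUnitary.2
  have hd : (diagonal (RCLike.ofReal ∘ hA.eigenvalues) : Matrix V V ℝ)
      = diagonal hA.eigenvalues := by
    congr 1
  have h1 : A.charpoly = (diagonal hA.eigenvalues).charpoly := by
    conv_lhs => rw [hA.spectral_theorem]
    rw [hd, Unitary.conjStarAlgAut_apply, charpoly_similar _ _ _ hU]
  rw [h1]
  have h2 : charmatrix (diagonal hA.eigenvalues)
      = diagonal (fun i => X - C (hA.eigenvalues i)) := by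
    ext i j
    by_cases hij : i = j
    · subst hij
      rw [charmatrix_apply_eq, diagonal_apply_eq, diagonal_apply_eq]
    · rw [charmatrix_apply_ne _ _ _ hij, diagonal_apply_ne _ hij, diagonal_apply_ne _ hij]
      simp
  rw [Matrix.charpoly, h2, det_diagonal]

lemma rootMult (hA : A.IsHermitian) (μ : ℝ) :
    A.charpoly.rootMultiplicity μ = (univ.filter fun i => hA.eigenvalues i = μ).card := by
  rw [← Polynomial.count_roots, charpoly_eq hA]
  have h1 : (∏ i, (X - C (hA.eigenvalues i)) : ℝ[X])
      = ((univ.val.map hA.eigenvalues).map fun a => X - C a).prod := by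
    rw [Multiset.map_map]
    rfl
  rw [h1, roots_multiset_prod_X_sub_C, Multiset.count_map]
  have h2 : Multiset.filter (fun a => μ = hA.eigenvalues a) univ.val
      = Multiset.filter (fun i => hA.eigenvalues i = μ) univ.val :=
    Multiset.filter_congr fun x _ => eq_comm
  rw [h2, Finset.card_def, Finset.filter_val]

lemma smul_fun_sum (a : ℝ) (x : V → ℝ) : ∑ v, (a • x) v = a * ∑ v, x v := by
  simp [Finset.mul_sum]

lemma card_ge_two (hA : A.IsHermitian) (μ : ℝ) (x y : V → ℝ) (hx0 : x ≠ 0)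
    (hx : A *ᵥ x = μ • x) (hxs : ∑ v, x v = 0)
    (hy : A *ᵥ y = μ • y) (hys : ∑ v, y v ≠ 0) :
    1 < (univ.filter fun i => hA.eigenvalues i = μ).card := by
  by_contra hle
  push_neg at hle
  interval_cases h : (univ.filter fun i => hA.eigenvalues i = μ).card
  · have hempty : (univ.filter fun i => hA.eigenvalues i = μ) = ∅ := Finset.card_eq_zero.mp h
    apply hx0
    apply eq_zero_of_repr hA
    intro i
    apply repr_eq_zero hA hx
    intro hc
    have hmem : i ∈ (univ.filter fun i => hA.eigenvalues i = μ) :=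
      Finset.mem_filter.mpr ⟨Finset.mem_univ i, hc⟩
    rw [hempty] at hmem
    exact Finset.notMem_empty i hmem
  · obtain ⟨i₀, hi₀⟩ := Finset.card_eq_one.mp h
    have hnot : ∀ i, i ≠ i₀ → hA.eigenvalues i ≠ μ := by
      intro i hi hc
      exact hi (Finset.mem_singleton.mp (hi₀ ▸ Finset.mem_filter.mpr ⟨Finset.mem_univ i, hc⟩))
    have hxy : (hA.eigenvectorBasis.repr y i₀) • x = (hA.eigenvectorBasis.repr x i₀) • y := by
      apply WithLp.toLp_injective 2
      rw [WithLp.toLp_smul, WithLp.toLp_smul]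
      apply hA.eigenvectorBasis.repr.injective
      apply PiLp.ext
      intro i
      rw [_root_.map_smul, _root_.map_smul, PiLp.smul_apply, PiLp.smul_apply,
        smul_eq_mul, smul_eq_mul]
      by_cases hi : i = i₀
      · subst hi; ring
      · rw [repr_eq_zero hA hx (hnot i hi), repr_eq_zero hA hy (hnot i hi)]; ring
    have hsx : hA.eigenvectorBasis.repr x i₀ ≠ 0 := by
      intro hc
      apply hx0
      apply eq_zero_of_repr hA
      intro i
      by_cases hi : i = i₀
      · subst hi; exact hc
      · exact repr_eq_zero hA hx (hnot i hi)
    have hsum := congrArg (fun z : V → ℝ => ∑ v, z v) hxy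
    simp only [smul_fun_sum, hxs, mul_zero] at hsum
    exact hys (by
      rcases mul_eq_zero.mp hsum.symm with h' | h'
      · exact absurd h' hsx
      · exact h')

lemma exists_sum_zero (hA : A.IsHermitian) (μ : ℝ)
    (h : 1 < (univ.filter fun i => hA.eigenvalues i = μ).card) :
    ∃ z : V → ℝ, z ≠ 0 ∧ A *ᵥ z = μ • z ∧ ∑ v, z v = 0 := by
  obtain ⟨i, hi, j, hj, hij⟩ := Finset.one_lt_card.mp h
  rw [Finset.mem_filter] at hi hj
  set bi : V → ℝ := fun v => hA.eigenvectorBasis i v with hbi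
  set bj : V → ℝ := fun v => hA.eigenvectorBasis j v with hbj
  have hAbi : A *ᵥ bi = μ • bi := by
    rw [show A *ᵥ bi = fun v => hA.eigenvalues i * hA.eigenvectorBasis i v from
      hA.mulVec_eigenvectorBasis i, hi.2]
    rfl
  have hAbj : A *ᵥ bj = μ • bj := by
    rw [show A *ᵥ bj = fun v => hA.eigenvalues j * hA.eigenvectorBasis j v from
      hA.mulVec_eigenvectorBasis j, hj.2]
    rfl
  have hrbi : hA.eigenvectorBasis.repr bi = EuclideanSpace.single i 1 :=
    hA.eigenvectorBasis.repr_self i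
  have hrbj : hA.eigenvectorBasis.repr bj = EuclideanSpace.single j 1 :=
    hA.eigenvectorBasis.repr_self j
  set si : ℝ := ∑ v, bi v with hsi
  set sj : ℝ := ∑ v, bj v with hsj
  by_cases hsi0 : si = 0
  · refine ⟨bi, ?_, hAbi, hsi0⟩
    intro h0
    have := congrArg (fun z : V → ℝ => hA.eigenvectorBasis.repr z i) h0
    simp only [hrbi] at this
    rw [show hA.eigenvectorBasis.repr (0 : V → ℝ) = 0 from map_zero _] at this
    simp [EuclideanSpace.single_apply] at this
  · refine ⟨si • bj - sj • bi, ?_, ?_, ?_⟩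
    · intro h0
      apply hsi0
      have := congrArg (fun z : V → ℝ => hA.eigenvectorBasis.repr z j) h0
      simp only [WithLp.toLp_sub, WithLp.toLp_smul, map_sub, _root_.map_smul, hrbi, hrbj] at this
      rw [show hA.eigenvectorBasis.repr (0 : V → ℝ) = 0 from map_zero _] at this
      simpa [EuclideanSpace.single_apply, hij.symm] using this
    · rw [Matrix.mulVec_sub, Matrix.mulVec_smul, Matrix.mulVec_smul, hAbi, hAbj,
        smul_sub, smul_comm si μ, smul_comm sj μ]
    · rw [show ∑ v, (si • bj - sj • bi) v = si * sj - sj * si from by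
        simp [Finset.sum_sub_distrib, ← Finset.mul_sum, ← hsi, ← hsj]]
      ring

lemma adj_isHermitian (G : SimpleGraph V) [DecidableRel G.Adj] :
    (G.adjMatrix ℝ).IsHermitian := by
  unfold Matrix.IsHermitian
  ext i j
  simp [Matrix.conjTranspose_apply, SimpleGraph.adjMatrix_apply, SimpleGraph.adj_comm]

lemma compl_mulVec (G : SimpleGraph V) [DecidableRel G.Adj] (x : V → ℝ) :
    (Gᶜ.adjMatrix ℝ) *ᵥ x = (fun _ => ∑ v, x v) - x - (G.adjMatrix ℝ) *ᵥ x := by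
  funext v
  simp only [Pi.sub_apply, mulVec, dotProduct, SimpleGraph.adjMatrix_apply,
    SimpleGraph.compl_adj]
  have h1 : ∀ u : V, (if v ≠ u ∧ ¬G.Adj v u then (1:ℝ) else 0) * x u
      = x u - (if u = v then (1:ℝ) else 0) * x u - (if G.Adj v u then (1:ℝ) else 0) * x u := by
    intro u
    by_cases huv : u = v
    · subst huv
      simp [G.loopless.irrefl u]
    · by_cases hadj : G.Adj v u <;> simp [huv, hadj, Ne.symm huv]
  rw [Finset.sum_congr rfl fun u _ => h1 u]
  rw [Finset.sum_sub_distrib, Finset.sum_sub_distrib]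
  congr 1
  congr 1
  rw [Finset.sum_congr rfl fun u (_ : u ∈ univ) => by
    rw [ite_mul, one_mul, zero_mul]]
  rw [Finset.sum_ite_eq' univ v (fun u => x u)]
  simp

lemma mulVec_of_compl_mulVec (G : SimpleGraph V) [DecidableRel G.Adj] (x : V → ℝ) :
    (G.adjMatrix ℝ) *ᵥ x = (fun _ => ∑ v, x v) - x - (Gᶜ.adjMatrix ℝ) *ᵥ x := by
  rw [compl_mulVec]
  abel

lemma basis_eigen (G : SimpleGraph V) [DecidableRel G.Adj] (i : V) :
    G.IsEigenvalue ((adj_isHermitian G).eigenvalues i) := by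
  refine ⟨fun v => (adj_isHermitian G).eigenvectorBasis i v, ?_, ?_⟩
  · intro h0
    apply (adj_isHermitian G).eigenvectorBasis.orthonormal.ne_zero i
    apply PiLp.ext; intro v; simpa using congrFun h0 v
  · rw [show (G.adjMatrix ℝ) *ᵥ (fun v => (adj_isHermitian G).eigenvectorBasis i v)
        = fun v => (adj_isHermitian G).eigenvalues i *
            (adj_isHermitian G).eigenvectorBasis i v from
        (adj_isHermitian G).mulVec_eigenvectorBasis i]
    rfl

lemma compl_transfer (G : SimpleGraph V) [DecidableRel G.Adj] {x : V → ℝ} {μ : ℝ}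
    (hx : (G.adjMatrix ℝ) *ᵥ x = μ • x) (hs : ∑ v, x v = 0) :
    (Gᶜ.adjMatrix ℝ) *ᵥ x = (-1 - μ) • x := by
  rw [compl_mulVec, hx, hs]
  funext v
  simp only [Pi.sub_apply, Pi.smul_apply, smul_eq_mul]
  ring

lemma top_is_main (G : SimpleGraph V) [DecidableRel G.Adj] {μ : ℝ}
    (hmax : IsGreatest {μ | G.IsEigenvalue μ} μ) :
    ∃ w : V → ℝ, w ≠ 0 ∧ (G.adjMatrix ℝ) *ᵥ w = μ • w ∧ ∑ v, w v ≠ 0 := by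
  obtain ⟨y, hy0, hy⟩ := hmax.1
  have hA := adj_isHermitian G
  have hup : ∀ i, hA.eigenvalues i ≤ μ := fun i => hmax.2 (basis_eigen G i)
  set w : V → ℝ := fun v => |y v| with hw
  obtain ⟨v0, hv0⟩ := Function.ne_iff.mp hy0
  have hv0' : y v0 ≠ 0 := by simpa using hv0
  have hw0 : w ≠ 0 := by
    intro h0
    exact hv0' (abs_eq_zero.mp (congrFun h0 v0))
  have hineq : μ * ∑ v, w v * w v ≤ ∑ v, ((G.adjMatrix ℝ) *ᵥ w) v * w v := by
    have e1 : ∑ v, w v * w v = ∑ v, y v * y v :=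
      Finset.sum_congr rfl fun v _ => abs_mul_abs_self _
    have e2 : ∑ v, ((G.adjMatrix ℝ) *ᵥ y) v * y v = μ * ∑ v, y v * y v := by
      rw [hy]
      simp only [Pi.smul_apply, smul_eq_mul, Finset.mul_sum]
      exact Finset.sum_congr rfl fun v _ => by ring
    have e3 : ∑ v, ((G.adjMatrix ℝ) *ᵥ y) v * y v
        ≤ ∑ v, ((G.adjMatrix ℝ) *ᵥ w) v * w v := by
      apply Finset.sum_le_sum
      intro v _
      simp only [mulVec, dotProduct, Finset.sum_mul]
      apply Finset.sum_le_sum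
      intro u _
      have hnn : (0:ℝ) ≤ G.adjMatrix ℝ v u := by
        rw [SimpleGraph.adjMatrix_apply]
        positivity
      calc G.adjMatrix ℝ v u * y u * y v = G.adjMatrix ℝ v u * (y u * y v) := by ring
        _ ≤ G.adjMatrix ℝ v u * |y u * y v| :=
            mul_le_mul_of_nonneg_left (le_abs_self _) hnn
        _ = G.adjMatrix ℝ v u * (w u * w v) := by rw [abs_mul]
        _ = G.adjMatrix ℝ v u * w u * w v := by ring
    rw [e1, ← e2]
    exact e3
  refine ⟨w, hw0, key hA μ hup w hineq, ?_⟩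
  have hpos : 0 < ∑ v, w v :=
    Finset.sum_pos' (fun v _ => abs_nonneg _) ⟨v0, Finset.mem_univ _, abs_pos.mpr hv0'⟩
  exact hpos.ne'

end CIEAux

theorem compl_index_eq_iff (G : SimpleGraph V) [DecidableRel G.Adj]
    (lamn mu1 : ℝ)
    (hmin : IsLeast {μ | G.IsEigenvalue μ} lamn)
    (hmax : IsGreatest {μ | Gᶜ.IsEigenvalue μ} mu1) :
    mu1 = -1 - lamn ↔ (G.IsNonMainEigenvalue lamn ∧ 1 < Gᶜ.eigMult mu1) := by
  have hAc := CIEAux.adj_isHermitian (Gᶜ)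
  have hupc : ∀ i, hAc.eigenvalues i ≤ mu1 := fun i => hmax.2 (CIEAux.basis_eigen (Gᶜ) i)
  constructor
  · intro h
    have hnm : ¬ G.IsMainEigenvalue lamn := by
      rintro ⟨z, hz0, hz, hzs⟩
      have hc : (Gᶜ.adjMatrix ℝ) *ᵥ z = (fun _ => ∑ v, z v) - z - lamn • z := by
        rw [CIEAux.compl_mulVec, hz]
      have hE : ∑ v, ((Gᶜ.adjMatrix ℝ) *ᵥ z) v * z v
          = (∑ v, z v) * (∑ v, z v) - (1 + lamn) * ∑ v, z v * z v := by
        rw [hc]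
        simp only [Pi.sub_apply, Pi.smul_apply, smul_eq_mul]
        rw [show ∀ S : ℝ, (∑ v, ((S - z v - lamn * z v) * z v))
            = ∑ v, (S * z v - z v * z v - lamn * (z v * z v)) from fun S =>
          Finset.sum_congr rfl fun v _ => by ring]
        rw [Finset.sum_sub_distrib, Finset.sum_sub_distrib, ← Finset.mul_sum,
          ← Finset.mul_sum]
        ring
      have hineq : mu1 * ∑ v, z v * z v ≤ ∑ v, ((Gᶜ.adjMatrix ℝ) *ᵥ z) v * z v := by
        rw [hE, h]
        nlinarith [mul_self_nonneg (∑ v, z v)]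
      have hkey := CIEAux.key hAc mu1 hupc z hineq
      have hE2 : ∑ v, ((Gᶜ.adjMatrix ℝ) *ᵥ z) v * z v = mu1 * ∑ v, z v * z v := by
        rw [hkey]
        simp only [Pi.smul_apply, smul_eq_mul, Finset.mul_sum]
        exact Finset.sum_congr rfl fun v _ => by ring
      rw [hE, h] at hE2
      have hS : (∑ v, z v) * (∑ v, z v) = 0 := by linarith
      exact hzs (mul_self_eq_zero.mp hS)
    refine ⟨⟨hmin.1, hnm⟩, ?_⟩
    obtain ⟨x, hx0, hx⟩ := hmin.1
    have hxs : ∑ v, x v = 0 := by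
      by_contra hs
      exact hnm ⟨x, hx0, hx, hs⟩
    have hxc : (Gᶜ.adjMatrix ℝ) *ᵥ x = mu1 • x := by
      rw [CIEAux.compl_transfer G hx hxs, h]
    obtain ⟨w, hw0, hwv, hws⟩ := CIEAux.top_is_main (Gᶜ) hmax
    have hcard := CIEAux.card_ge_two hAc mu1 x w hx0 hxc hxs hwv hws
    unfold SimpleGraph.eigMult
    rwa [CIEAux.rootMult hAc]
  · rintro ⟨⟨hev, hnm⟩, hmult⟩
    obtain ⟨x, hx0, hx⟩ := hev
    have hxs : ∑ v, x v = 0 := by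
      by_contra hs
      exact hnm ⟨x, hx0, hx, hs⟩
    have h1 : -1 - lamn ≤ mu1 := hmax.2 ⟨x, hx0, CIEAux.compl_transfer G hx hxs⟩
    have hcard : 1 < (univ.filter fun i => hAc.eigenvalues i = mu1).card := by
      unfold SimpleGraph.eigMult at hmult
      rwa [CIEAux.rootMult hAc] at hmult
    obtain ⟨z, hz0, hz, hzs⟩ := CIEAux.exists_sum_zero hAc mu1 hcard
    have h2 : lamn ≤ -1 - mu1 := hmin.2 ⟨z, hz0, by
      rw [CIEAux.mulVec_of_compl_mulVec, hz, hzs]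
      funext v
      simp only [Pi.sub_apply, Pi.smul_apply, smul_eq_mul]
      ring⟩
    linarith
end

section
/- Let G be a connected bipartite graph of order n. Then λ₁(Ḡ) = −1 − λₙ(G) if and only if G is a balanced complete bipartite graph K_{r,r} (so n = 2r). -/
set_option linter.unusedSectionVars false
set_option maxHeartbeats 1000000

open Matrix Finset Polynomial

variable {V : Type*} [Fintype V] [DecidableEq V]

/-! ### Auxiliary Rayleigh-quotient lemmas -/

private lemma shift_posSemidef (H : SimpleGraph V) [DecidableRel H.Adj] {m : ℝ}
    (hm : ∀ μ, H.IsEigenvalue μ → μ ≤ m) :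
    (m • (1 : Matrix V V ℝ) - H.adjMatrix ℝ).PosSemidef := by
  have hM : (m • (1 : Matrix V V ℝ) - H.adjMatrix ℝ).IsHermitian := by
    ext i j
    simp [Matrix.conjTranspose_apply, Matrix.one_apply, SimpleGraph.adjMatrix_apply,
      H.adj_comm, eq_comm]
  refine (Matrix.IsHermitian.posSemidef_iff_eigenvalues_nonneg hM).mpr fun i => show (0:ℝ) ≤ hM.eigenvalues i from ?_
  have hv0 : (⇑(hM.eigenvectorBasis i) : V → ℝ) ≠ 0 := by
    have := hM.eigenvectorBasis.orthonormal.ne_zero i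
    intro h
    exact this (by ext v; exact congrFun h v)
  have hMv := hM.mulVec_eigenvectorBasis i
  have hAv : H.adjMatrix ℝ *ᵥ ⇑(hM.eigenvectorBasis i)
      = (m - hM.eigenvalues i) • ⇑(hM.eigenvectorBasis i) := by
    have h2 : (m • (1 : Matrix V V ℝ) - H.adjMatrix ℝ) *ᵥ ⇑(hM.eigenvectorBasis i)
        = m • ⇑(hM.eigenvectorBasis i) - H.adjMatrix ℝ *ᵥ ⇑(hM.eigenvectorBasis i) := by
      rw [Matrix.sub_mulVec, Matrix.smul_mulVec, Matrix.one_mulVec]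
    rw [h2] at hMv
    have : H.adjMatrix ℝ *ᵥ ⇑(hM.eigenvectorBasis i)
        = m • ⇑(hM.eigenvectorBasis i) - hM.eigenvalues i • ⇑(hM.eigenvectorBasis i) := by
      rw [← hMv]; abel
    rw [this, sub_smul]
  have := hm _ ⟨_, hv0, hAv⟩
  linarith

private lemma rayleigh_le (H : SimpleGraph V) [DecidableRel H.Adj] {m : ℝ}
    (hm : ∀ μ, H.IsEigenvalue μ → μ ≤ m) (y : V → ℝ) :
    y ⬝ᵥ (H.adjMatrix ℝ *ᵥ y) ≤ m * (y ⬝ᵥ y) := by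
  have h := (shift_posSemidef H hm).dotProduct_mulVec_nonneg y
  rw [show star y = y from by simp] at h
  rw [Matrix.sub_mulVec, dotProduct_sub, Matrix.smul_mulVec,
    Matrix.one_mulVec, dotProduct_smul, smul_eq_mul] at h
  linarith

private lemma rayleigh_eq (H : SimpleGraph V) [DecidableRel H.Adj] {m : ℝ}
    (hm : ∀ μ, H.IsEigenvalue μ → μ ≤ m) {y : V → ℝ}
    (h : y ⬝ᵥ (H.adjMatrix ℝ *ᵥ y) = m * (y ⬝ᵥ y)) :
    H.adjMatrix ℝ *ᵥ y = m • y := by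
  have h0 : star y ⬝ᵥ ((m • (1 : Matrix V V ℝ) - H.adjMatrix ℝ) *ᵥ y) = 0 := by
    rw [show star y = y from by simp, Matrix.sub_mulVec, dotProduct_sub,
      Matrix.smul_mulVec, Matrix.one_mulVec, dotProduct_smul, smul_eq_mul]
    linarith
  have h1 := ((shift_posSemidef H hm).dotProduct_mulVec_zero_iff y).mp h0
  rw [Matrix.sub_mulVec, Matrix.smul_mulVec, Matrix.one_mulVec, sub_eq_zero] at h1
  exact h1.symm

private lemma compl_mulVec_apply (G : SimpleGraph V) [DecidableRel G.Adj] (y : V → ℝ) (v : V) :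
    (Gᶜ.adjMatrix ℝ *ᵥ y) v = (∑ u, y u) - y v - (G.adjMatrix ℝ *ᵥ y) v := by
  simp only [Matrix.mulVec, dotProduct]
  have key : ∀ u, Gᶜ.adjMatrix ℝ v u
      = 1 - (if v = u then (1:ℝ) else 0) - G.adjMatrix ℝ v u := by
    intro u
    by_cases h : v = u
    · subst h; simp
    · by_cases ha : G.Adj v u <;>
        simp [SimpleGraph.adjMatrix_apply, SimpleGraph.compl_adj, h, ha]
  rw [Finset.sum_congr rfl fun u _ => by rw [key u]]
  simp only [sub_mul, one_mul, Finset.sum_sub_distrib]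
  congr 2
  simp [Finset.sum_ite_eq]

/-! ### Spectra of complete bipartite graphs given by a vertex bipartition -/

section parts

variable (G : SimpleGraph V) [DecidableRel G.Adj] (S : Finset V)
variable (hadj : ∀ u v, G.Adj u v ↔ (u ∈ S ∧ v ∉ S) ∨ (v ∈ S ∧ u ∉ S))

include hadj

private lemma nbhd_of_mem {v : V} (hv : v ∈ S) : G.neighborFinset v = Sᶜ := by
  ext u
  simp only [SimpleGraph.mem_neighborFinset, Finset.mem_compl, hadj v u]
  constructor
  · rintro (⟨_, h⟩ | ⟨_, h⟩)
    · exact h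
    · exact absurd hv h
  · exact fun h => Or.inl ⟨hv, h⟩

private lemma nbhd_of_not_mem {v : V} (hv : v ∉ S) : G.neighborFinset v = S := by
  ext u
  simp only [SimpleGraph.mem_neighborFinset, Finset.mem_compl, hadj v u]
  constructor
  · rintro (⟨h, _⟩ | ⟨h, _⟩)
    · exact absurd h hv
    · exact h
  · exact fun h => Or.inr ⟨h, hv⟩

private lemma cnbhd_of_mem {v : V} (hv : v ∈ S) : Gᶜ.neighborFinset v = S.erase v := by
  ext u
  simp only [SimpleGraph.mem_neighborFinset, SimpleGraph.compl_adj, Finset.mem_erase]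
  constructor
  · rintro ⟨hne, hna⟩
    refine ⟨Ne.symm hne, ?_⟩
    by_contra hu
    exact hna ((hadj v u).mpr (Or.inl ⟨hv, hu⟩))
  · rintro ⟨hne, hu⟩
    refine ⟨Ne.symm hne, fun ha => ?_⟩
    rcases (hadj v u).mp ha with ⟨_, h⟩ | ⟨_, h⟩
    · exact h hu
    · exact h hv

private lemma cnbhd_of_not_mem {v : V} (hv : v ∉ S) : Gᶜ.neighborFinset v = Sᶜ.erase v := by
  ext u
  simp only [SimpleGraph.mem_neighborFinset, SimpleGraph.compl_adj, Finset.mem_erase,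
    Finset.mem_compl]
  constructor
  · rintro ⟨hne, hna⟩
    refine ⟨Ne.symm hne, fun hu => ?_⟩
    exact hna ((hadj v u).mpr (Or.inr ⟨hu, hv⟩))
  · rintro ⟨hne, hu⟩
    refine ⟨Ne.symm hne, fun ha => ?_⟩
    rcases (hadj v u).mp ha with ⟨h, _⟩ | ⟨h, _⟩
    · exact hv h
    · exact hu h

private lemma eig_bip {μ : ℝ} (h : G.IsEigenvalue μ) :
    μ = 0 ∨ μ ^ 2 = (S.card : ℝ) * (Sᶜ.card : ℝ) := by
  obtain ⟨x, hx0, hx⟩ := h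
  have hpt : ∀ v, (G.adjMatrix ℝ *ᵥ x) v = μ * x v := fun v => by
    rw [hx]; simp
  have hmem : ∀ v ∈ S, μ * x v = ∑ u ∈ Sᶜ, x u := by
    intro v hv
    rw [← hpt v, SimpleGraph.adjMatrix_mulVec_apply, nbhd_of_mem G S hadj hv]
  have hnmem : ∀ v ∈ Sᶜ, μ * x v = ∑ u ∈ S, x u := by
    intro v hv
    rw [← hpt v, SimpleGraph.adjMatrix_mulVec_apply,
      nbhd_of_not_mem G S hadj (Finset.mem_compl.mp hv)]
  set TA := ∑ u ∈ S, x u with hTA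
  set TB := ∑ u ∈ Sᶜ, x u with hTB
  have h1 : μ * TA = (S.card : ℝ) * TB := by
    rw [hTA, Finset.mul_sum, Finset.sum_congr rfl hmem, Finset.sum_const, nsmul_eq_mul]
  have h2 : μ * TB = (Sᶜ.card : ℝ) * TA := by
    rw [hTB, Finset.mul_sum, Finset.sum_congr rfl hnmem, Finset.sum_const, nsmul_eq_mul]
  by_cases hA0 : TA = 0
  · by_cases hB0 : TB = 0
    · left
      obtain ⟨v, hv⟩ := Function.ne_iff.mp hx0
      have hv' : x v ≠ 0 := by simpa using hv
      have : μ * x v = 0 := by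
        by_cases hvS : v ∈ S
        · rw [hmem v hvS, hB0]
        · rw [hnmem v (Finset.mem_compl.mpr hvS), hA0]
      exact (mul_eq_zero.mp this).resolve_right hv'
    · right
      refine mul_right_cancel₀ hB0 ?_
      calc μ ^ 2 * TB = μ * (μ * TB) := by ring
        _ = μ * ((Sᶜ.card : ℝ) * TA) := by rw [h2]
        _ = (Sᶜ.card : ℝ) * (μ * TA) := by ring
        _ = (Sᶜ.card : ℝ) * ((S.card : ℝ) * TB) := by rw [h1]
        _ = (S.card : ℝ) * (Sᶜ.card : ℝ) * TB := by ring
  · right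
    refine mul_right_cancel₀ hA0 ?_
    calc μ ^ 2 * TA = μ * (μ * TA) := by ring
      _ = μ * ((S.card : ℝ) * TB) := by rw [h1]
      _ = (S.card : ℝ) * (μ * TB) := by ring
      _ = (S.card : ℝ) * ((Sᶜ.card : ℝ) * TA) := by rw [h2]
      _ = (S.card : ℝ) * (Sᶜ.card : ℝ) * TA := by ring

private lemma eig_compl {μ : ℝ} (h : Gᶜ.IsEigenvalue μ) :
    μ = -1 ∨ μ = (S.card : ℝ) - 1 ∨ μ = (Sᶜ.card : ℝ) - 1 := by
  obtain ⟨x, hx0, hx⟩ := h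
  have hpt : ∀ v, (Gᶜ.adjMatrix ℝ *ᵥ x) v = μ * x v := fun v => by
    rw [hx]; simp
  set TA := ∑ u ∈ S, x u with hTA
  set TB := ∑ u ∈ Sᶜ, x u with hTB
  have hmem : ∀ v ∈ S, (μ + 1) * x v = TA := by
    intro v hv
    have := hpt v
    rw [SimpleGraph.adjMatrix_mulVec_apply, cnbhd_of_mem G S hadj hv,
      Finset.sum_erase_eq_sub hv, ← hTA] at this
    linear_combination -this
  have hnmem : ∀ v ∈ Sᶜ, (μ + 1) * x v = TB := by
    intro v hv
    have := hpt v
    rw [SimpleGraph.adjMatrix_mulVec_apply,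
      cnbhd_of_not_mem G S hadj (Finset.mem_compl.mp hv),
      Finset.sum_erase_eq_sub hv, ← hTB] at this
    linear_combination -this
  have h1 : (μ + 1) * TA = (S.card : ℝ) * TA := by
    rw [hTA, Finset.mul_sum, Finset.sum_congr rfl hmem, Finset.sum_const, nsmul_eq_mul]
  have h2 : (μ + 1) * TB = (Sᶜ.card : ℝ) * TB := by
    rw [hTB, Finset.mul_sum, Finset.sum_congr rfl hnmem, Finset.sum_const, nsmul_eq_mul]
  by_cases hA0 : TA = 0
  · by_cases hB0 : TB = 0
    · left
      obtain ⟨v, hv⟩ := Function.ne_iff.mp hx0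
      have hv' : x v ≠ 0 := by simpa using hv
      have : (μ + 1) * x v = 0 := by
        by_cases hvS : v ∈ S
        · rw [hmem v hvS, hA0]
        · rw [hnmem v (Finset.mem_compl.mpr hvS), hB0]
      have := (mul_eq_zero.mp this).resolve_right hv'
      linarith
    · right; right
      have := mul_right_cancel₀ hB0 h2
      linarith
  · right; left
    have := mul_right_cancel₀ hA0 h1
    linarith

private lemma eig_compl_card (hS : S.Nonempty) : Gᶜ.IsEigenvalue ((S.card : ℝ) - 1) := by
  refine ⟨fun v => if v ∈ S then 1 else 0, ?_, ?_⟩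
  · obtain ⟨v, hv⟩ := hS
    intro h
    have := congrFun h v
    simp [hv] at this
  · funext v
    rw [SimpleGraph.adjMatrix_mulVec_apply]
    by_cases hv : v ∈ S
    · rw [cnbhd_of_mem G S hadj hv]
      rw [Finset.sum_congr rfl (fun u hu => if_pos (Finset.mem_of_mem_erase hu))]
      simp [Finset.card_erase_of_mem hv, hv, Nat.cast_sub (Finset.card_pos.mpr ⟨v, hv⟩)]
    · rw [cnbhd_of_not_mem G S hadj hv]
      rw [Finset.sum_congr rfl
        (fun u hu => if_neg (Finset.mem_compl.mp (Finset.mem_of_mem_erase hu)))]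
      simp [hv]

private lemma eig_neg_bal (hS : S.Nonempty) (hbal : Sᶜ.card = S.card) :
    G.IsEigenvalue (-(S.card : ℝ)) := by
  refine ⟨fun v => if v ∈ S then 1 else -1, ?_, ?_⟩
  · obtain ⟨v, hv⟩ := hS
    intro h
    have := congrFun h v
    simp [hv] at this
  · funext v
    rw [SimpleGraph.adjMatrix_mulVec_apply]
    by_cases hv : v ∈ S
    · rw [nbhd_of_mem G S hadj hv]
      rw [Finset.sum_congr rfl (fun u hu => if_neg (Finset.mem_compl.mp hu))]
      simp [hv, hbal]
    · rw [nbhd_of_not_mem G S hadj hv]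
      rw [Finset.sum_congr rfl (fun u hu => if_pos hu)]
      simp [hv]

end parts

/-! ### Building the graph isomorphism -/

private def leftEquiv (α β : Type*) : {s : α ⊕ β // s.isLeft} ≃ α where
  toFun s := s.1.getLeft s.2
  invFun a := ⟨Sum.inl a, rfl⟩
  left_inv := by rintro ⟨(a | b), h⟩
                 · rfl
                 · simp at h
  right_inv a := rfl

private def rightEquiv (α β : Type*) : {s : α ⊕ β // ¬ s.isLeft} ≃ β where
  toFun s := s.1.getRight (by rcases s with ⟨(a | b), h⟩
                              · exact absurd rfl h
                              · rfl)
  invFun b := ⟨Sum.inr b, by simp⟩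
  left_inv := by rintro ⟨(a | b), h⟩
                 · simp at h
                 · rfl
  right_inv b := rfl

private lemma iso_of_parts (G : SimpleGraph V) [DecidableRel G.Adj] (S : Finset V)
    (hadj : ∀ u v, G.Adj u v ↔ (u ∈ S ∧ v ∉ S) ∨ (v ∈ S ∧ u ∉ S)) {r : ℕ}
    (ha : S.card = r) (hb : Sᶜ.card = r) :
    Nonempty (G ≃g completeBipartiteGraph (Fin r) (Fin r)) := by
  have e1 : {v // v ∈ S} ≃ Fin r :=
    Fintype.equivFinOfCardEq (by rw [Fintype.card_coe]; exact ha)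
  have e2 : {v // ¬ v ∈ S} ≃ Fin r := by
    refine Fintype.equivFinOfCardEq ?_
    rw [show Fintype.card {v // ¬ v ∈ S} = Fintype.card {v // v ∈ Sᶜ} from
      Fintype.card_congr (Equiv.subtypeEquivRight (by simp)), Fintype.card_coe]
    exact hb
  refine ⟨⟨(Equiv.sumCompl (· ∈ S)).symm.trans (Equiv.sumCongr e1 e2), ?_⟩⟩
  intro u v
  by_cases hu : u ∈ S <;> by_cases hv : v ∈ S <;>
    simp [Equiv.sumCompl_symm_apply_of_pos, Equiv.sumCompl_symm_apply_of_neg, hu, hv,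
      hadj u v]

theorem bipartite_compl_index_iff_balanced_complete (G : SimpleGraph V)
    [DecidableRel G.Adj] (hconn : G.Connected) (hbip : G.Colorable 2)
    (lamn mu1 : ℝ)
    (hmin : IsLeast {μ | G.IsEigenvalue μ} lamn)
    (hmax : IsGreatest {μ | Gᶜ.IsEigenvalue μ} mu1) :
    mu1 = -1 - lamn ↔
      ∃ r : ℕ, Fintype.card V = 2 * r ∧
        Nonempty (G ≃g completeBipartiteGraph (Fin r) (Fin r)) := by
  constructor
  · intro hmeq
    obtain ⟨x, hx0, hx⟩ := hmin.1
    have hm : ∀ μ, Gᶜ.IsEigenvalue μ → μ ≤ mu1 := fun μ hμ => hmax.2 hμ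
    have hpt : ∀ v, (G.adjMatrix ℝ *ᵥ x) v = lamn * x v := fun v => by rw [hx]; simp
    have hBpt : ∀ v, (Gᶜ.adjMatrix ℝ *ᵥ x) v = (∑ u, x u) - x v - lamn * x v := fun v => by
      rw [compl_mulVec_apply, hpt v]
    have hexp : ∀ y : V → ℝ,
        y ⬝ᵥ (Gᶜ.adjMatrix ℝ *ᵥ y) = ∑ v, ∑ u, Gᶜ.adjMatrix ℝ v u * (y v * y u) := by
      intro y
      simp only [dotProduct, Matrix.mulVec, Finset.mul_sum]
      exact Finset.sum_congr rfl fun v _ => Finset.sum_congr rfl fun u _ => by ring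
    have hBnn : ∀ v u, (0:ℝ) ≤ Gᶜ.adjMatrix ℝ v u := fun v u => by
      rw [SimpleGraph.adjMatrix_apply]
      positivity
    set ax : V → ℝ := fun v => |x v| with hax
    have hterm_le : ∀ v u, Gᶜ.adjMatrix ℝ v u * (x v * x u)
        ≤ Gᶜ.adjMatrix ℝ v u * (ax v * ax u) := fun v u =>
      mul_le_mul_of_nonneg_left ((le_abs_self _).trans (abs_mul _ _).le) (hBnn v u)
    have hmono : x ⬝ᵥ (Gᶜ.adjMatrix ℝ *ᵥ x) ≤ ax ⬝ᵥ (Gᶜ.adjMatrix ℝ *ᵥ ax) := by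
      rw [hexp x, hexp ax]
      exact Finset.sum_le_sum fun v _ => Finset.sum_le_sum fun u _ => hterm_le v u
    have haxax : ax ⬝ᵥ ax = x ⬝ᵥ x := by
      simp only [dotProduct, hax]
      exact Finset.sum_congr rfl fun v _ => abs_mul_abs_self _
    have hxBx : x ⬝ᵥ (Gᶜ.adjMatrix ℝ *ᵥ x)
        = (∑ v, x v) * (∑ v, x v) + mu1 * (x ⬝ᵥ x) := by
      have h1 : x ⬝ᵥ (Gᶜ.adjMatrix ℝ *ᵥ x)
          = ∑ v, x v * ((∑ u, x u) - x v - lamn * x v) := by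
        simp only [dotProduct]
        exact Finset.sum_congr rfl fun v _ => by rw [hBpt v]
      have h2 : ∀ v, x v * ((∑ u, x u) - x v - lamn * x v)
          = x v * (∑ u, x u) - (1 + lamn) * (x v * x v) := fun v => by ring
      rw [h1, Finset.sum_congr rfl fun v _ => h2 v, Finset.sum_sub_distrib,
        ← Finset.sum_mul, ← Finset.mul_sum]
      have h3 : x ⬝ᵥ x = ∑ v, x v * x v := rfl
      rw [h3, hmeq]; ring
    have hray := rayleigh_le Gᶜ hm ax
    rw [haxax] at hray
    have hs0 : (∑ v, x v) = 0 := by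
      have h1 : (∑ v, x v) * (∑ v, x v) + mu1 * (x ⬝ᵥ x) ≤ mu1 * (x ⬝ᵥ x) := by
        rw [← hxBx]; exact hmono.trans hray
      have h2 : (∑ v, x v) * (∑ v, x v) ≤ 0 := by linarith
      exact mul_self_eq_zero.mp (le_antisymm h2 (mul_self_nonneg _))
    have hxBx' : x ⬝ᵥ (Gᶜ.adjMatrix ℝ *ᵥ x) = mu1 * (x ⬝ᵥ x) := by
      rw [hxBx, hs0]; ring
    have haxBax : ax ⬝ᵥ (Gᶜ.adjMatrix ℝ *ᵥ ax) = mu1 * (ax ⬝ᵥ ax) := by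
      rw [haxax]; linarith [hmono, hray, hxBx']
    have haxeig := rayleigh_eq Gᶜ hm haxBax
    have hterm : ∀ v u, Gᶜ.adjMatrix ℝ v u * (ax v * ax u)
        = Gᶜ.adjMatrix ℝ v u * (x v * x u) := by
      have hzero : ∑ v, (∑ u, Gᶜ.adjMatrix ℝ v u * (ax v * ax u)
          - ∑ u, Gᶜ.adjMatrix ℝ v u * (x v * x u)) = 0 := by
        rw [Finset.sum_sub_distrib, ← hexp x, ← hexp ax, hxBx', haxBax, haxax]
        ring
      have houter : ∀ v, 0 ≤ ∑ u, Gᶜ.adjMatrix ℝ v u * (ax v * ax u)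
          - ∑ u, Gᶜ.adjMatrix ℝ v u * (x v * x u) := fun v => by
        rw [sub_nonneg]
        exact Finset.sum_le_sum fun u _ => hterm_le v u
      have h1 := (Finset.sum_eq_zero_iff_of_nonneg (fun v _ => houter v)).mp hzero
      intro v u
      have h2 : ∑ u', (Gᶜ.adjMatrix ℝ v u' * (ax v * ax u')
          - Gᶜ.adjMatrix ℝ v u' * (x v * x u')) = 0 := by
        rw [Finset.sum_sub_distrib]
        exact h1 v (Finset.mem_univ v)
      have h3 := (Finset.sum_eq_zero_iff_of_nonneg
        (fun u' _ => sub_nonneg.mpr (hterm_le v u'))).mp h2 u (Finset.mem_univ u)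
      linarith [h3]
    set S : Finset V := Finset.univ.filter (fun v => 0 < x v) with hSdef
    have hmemS : ∀ v, v ∈ S ↔ 0 < x v := fun v => by simp [hSdef]
    have hNS : S.Nonempty := by
      by_contra h
      rw [Finset.not_nonempty_iff_eq_empty] at h
      have hall : ∀ v ∈ Finset.univ, x v ≤ 0 := by
        intro v _
        by_contra h'
        push_neg at h'
        have : v ∈ S := (hmemS v).mpr h'
        simp [h] at this
      have hz := (Finset.sum_eq_zero_iff_of_nonpos hall).mp hs0
      exact hx0 (funext fun v => hz v (Finset.mem_univ v))
    have hVne : Nonempty V := ⟨hNS.choose⟩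
    have hNS' : Sᶜ.Nonempty := by
      by_contra h
      rw [Finset.not_nonempty_iff_eq_empty, Finset.compl_eq_empty_iff] at h
      have hall : ∀ v ∈ Finset.univ, 0 < x v := fun v _ =>
        (hmemS v).mp (h ▸ Finset.mem_univ v)
      have : 0 < ∑ v, x v := Finset.sum_pos hall Finset.univ_nonempty
      linarith [hs0]
    have hkey : ∀ u v, u ∈ S → v ∉ S → G.Adj u v := by
      intro u v hu hv
      have hxu : 0 < x u := (hmemS u).mp hu
      have hxv : x v ≤ 0 := le_of_not_gt (fun h => hv ((hmemS v).mpr h))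
      by_contra hne
      have hc : Gᶜ.Adj v u := by
        rw [SimpleGraph.compl_adj]
        exact ⟨fun h => by rw [h] at hxv; linarith, fun h => hne h.symm⟩
      have hone : Gᶜ.adjMatrix ℝ v u = 1 := by
        rw [SimpleGraph.adjMatrix_apply, if_pos hc]
      rcases lt_or_eq_of_le hxv with hlt | heq
      · have h3 := hterm v u
        rw [hone, one_mul, one_mul] at h3
        have hax1 : ax v = |x v| := rfl
        have hax2 : ax u = |x u| := rfl
        rw [hax1, hax2] at h3
        have hp : 0 < |x v| * |x u| :=
          mul_pos (abs_pos.mpr (ne_of_lt hlt)) (abs_pos.mpr (ne_of_gt hxu))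
        nlinarith [h3, hp, mul_pos hxu (neg_pos.mpr hlt)]
      · have h4 := congrFun haxeig v
        have haxv : ax v = 0 := by
          show |x v| = 0
          rw [heq]; exact abs_zero
        have h5 : (Gᶜ.adjMatrix ℝ *ᵥ ax) v = 0 := by
          rw [h4, Pi.smul_apply, haxv, smul_eq_mul, mul_zero]
        have h7 : (Gᶜ.adjMatrix ℝ *ᵥ ax) v = ∑ u', Gᶜ.adjMatrix ℝ v u' * ax u' := by
          simp [Matrix.mulVec, dotProduct]
        have h6 : Gᶜ.adjMatrix ℝ v u * ax u ≤ ∑ u', Gᶜ.adjMatrix ℝ v u' * ax u' :=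
          Finset.single_le_sum (fun i _ => mul_nonneg (hBnn v i) (abs_nonneg _))
            (Finset.mem_univ u)
        rw [hone, one_mul] at h6
        have hpu : 0 < ax u := abs_pos.mpr (ne_of_gt hxu)
        rw [h7] at h5
        linarith
    have hcol := hbip.some
    have htri : ∀ u v w : V, G.Adj u v → G.Adj u w → G.Adj v w → False := by
      intro u v w h1 h2 h3
      have e1 : hcol u ≠ hcol v := hcol.valid h1
      have e2 : hcol u ≠ hcol w := hcol.valid h2
      have e3 : hcol v ≠ hcol w := hcol.valid h3
      have n1 : (hcol u).val ≠ (hcol v).val := fun h => e1 (Fin.val_injective h)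
      have n2 : (hcol u).val ≠ (hcol w).val := fun h => e2 (Fin.val_injective h)
      have n3 : (hcol v).val ≠ (hcol w).val := fun h => e3 (Fin.val_injective h)
      have b1 := (hcol u).isLt
      have b2 := (hcol v).isLt
      have b3 := (hcol w).isLt
      omega
    have hind : ∀ u v, u ∈ S → v ∈ S → ¬ G.Adj u v := by
      intro u v hu hv hA
      obtain ⟨w, hw⟩ := hNS'
      have hw' : w ∉ S := Finset.mem_compl.mp hw
      exact htri u v w hA (hkey u w hu hw') (hkey v w hv hw')
    have hind' : ∀ u v, u ∉ S → v ∉ S → ¬ G.Adj u v := by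
      intro u v hu hv hA
      obtain ⟨w, hw⟩ := hNS
      exact htri u v w hA ((hkey w u hw hu).symm) ((hkey w v hw hv).symm)
    have hadj : ∀ u v, G.Adj u v ↔ (u ∈ S ∧ v ∉ S) ∨ (v ∈ S ∧ u ∉ S) := by
      intro u v
      constructor
      · intro h
        by_cases hu : u ∈ S <;> by_cases hv : v ∈ S
        · exact absurd h (hind u v hu hv)
        · exact Or.inl ⟨hu, hv⟩
        · exact Or.inr ⟨hv, hu⟩
        · exact absurd h (hind' u v hu hv)
      · rintro (⟨hu, hv⟩ | ⟨hv, hu⟩)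
        · exact hkey u v hu hv
        · exact (hkey v u hv hu).symm
    have hc1 := hmax.2 (eig_compl_card G S hadj hNS)
    have hadj' : ∀ u v, G.Adj u v ↔ (u ∈ Sᶜ ∧ v ∉ Sᶜ) ∨ (v ∈ Sᶜ ∧ u ∉ Sᶜ) := by
      intro u v
      rw [hadj u v]
      simp only [Finset.mem_compl, not_not]
      tauto
    have hc2 := hmax.2 (eig_compl_card G Sᶜ hadj' hNS')
    have ha1 : (1:ℝ) ≤ (S.card : ℝ) := by
      exact_mod_cast Nat.one_le_iff_ne_zero.mpr (Finset.card_ne_zero_of_mem hNS.choose_spec)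
    have hb1 : (1:ℝ) ≤ (Sᶜ.card : ℝ) := by
      exact_mod_cast Nat.one_le_iff_ne_zero.mpr (Finset.card_ne_zero_of_mem hNS'.choose_spec)
    have hcards := Finset.card_add_card_compl S
    rcases eig_compl G S hadj hmax.1 with h | h | h
    · exfalso; rw [h] at hc1; linarith
    · -- mu1 = S.card - 1, so lamn = -S.card, hence S.card ^ 2 = S.card * Sᶜ.card
      have hlam : lamn = -(S.card : ℝ) := by rw [hmeq] at h; linarith
      rcases eig_bip G S hadj hmin.1 with h0 | hsq
      · exfalso; rw [h0] at hlam; linarith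
      · rw [hlam] at hsq
        have hsq' : (S.card : ℝ) * (S.card : ℝ) = (S.card : ℝ) * (Sᶜ.card : ℝ) := by
          nlinarith [hsq]
        have hab : (S.card : ℝ) = (Sᶜ.card : ℝ) :=
          mul_left_cancel₀ (by linarith) hsq'
        have habn : S.card = Sᶜ.card := by exact_mod_cast hab
        exact ⟨S.card, by omega, iso_of_parts G S hadj rfl habn.symm⟩
    · -- mu1 = Sᶜ.card - 1
      have hlam : lamn = -(Sᶜ.card : ℝ) := by rw [hmeq] at h; linarith
      rcases eig_bip G S hadj hmin.1 with h0 | hsq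
      · exfalso; rw [h0] at hlam; linarith
      · rw [hlam] at hsq
        have hsq' : (Sᶜ.card : ℝ) * (S.card : ℝ) = (Sᶜ.card : ℝ) * (Sᶜ.card : ℝ) := by
          nlinarith [hsq]
        have hab : (S.card : ℝ) = (Sᶜ.card : ℝ) :=
          mul_left_cancel₀ (by linarith) hsq'
        have habn : S.card = Sᶜ.card := by exact_mod_cast hab
        exact ⟨S.card, by omega, iso_of_parts G S hadj rfl habn.symm⟩
  · rintro ⟨r, hcard, ⟨e⟩⟩
    set S : Finset V := Finset.univ.filter (fun v => (e v).isLeft) with hSdef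
    have hmemS : ∀ v, v ∈ S ↔ (e v).isLeft := fun v => by simp [hSdef]
    have hadj : ∀ u v, G.Adj u v ↔ (u ∈ S ∧ v ∉ S) ∨ (v ∈ S ∧ u ∉ S) := by
      intro u v
      rw [← e.map_rel_iff]
      simp only [completeBipartiteGraph_adj, hmemS]
      cases hu' : e u <;> cases hv' : e v <;> simp [hu', hv']
    have hScard : S.card = r := by
      have e' : {v // (e v).isLeft} ≃ {s : Fin r ⊕ Fin r // s.isLeft} :=
        e.toEquiv.subtypeEquiv (fun v => by rfl)
      calc S.card = Fintype.card {v // (e v).isLeft} := by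
            rw [hSdef, Fintype.card_subtype]
        _ = Fintype.card {s : Fin r ⊕ Fin r // s.isLeft} := Fintype.card_congr e'
        _ = Fintype.card (Fin r) := Fintype.card_congr (leftEquiv _ _)
        _ = r := Fintype.card_fin r
    have hcards := Finset.card_add_card_compl S
    have hSccard : Sᶜ.card = r := by omega
    have hVne : Nonempty V := hconn.nonempty
    have hr1 : 1 ≤ r := by
      have := Fintype.card_pos (α := V)
      omega
    have hNS : S.Nonempty := Finset.card_pos.mp (by rw [hScard]; omega)
    have hneg := eig_neg_bal G S hadj hNS (by rw [hSccard, hScard])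
    rw [hScard] at hneg
    have hle := hmin.2 hneg
    have hr1' : (1:ℝ) ≤ (r : ℝ) := by exact_mod_cast hr1
    have hlam : lamn = -(r:ℝ) := by
      rcases eig_bip G S hadj hmin.1 with h0 | hsq
      · exfalso; rw [h0] at hle; linarith
      · rw [hScard, hSccard] at hsq
        have hfac : (lamn - r) * (lamn + r) = 0 := by nlinarith [hsq]
        rcases mul_eq_zero.mp hfac with h | h
        · exfalso
          have : lamn = (r:ℝ) := by linarith
          rw [this] at hle; linarith
        · linarith
    have hc1 := hmax.2 (eig_compl_card G S hadj hNS)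
    rw [hScard] at hc1
    have hmu : mu1 = (r:ℝ) - 1 := by
      rcases eig_compl G S hadj hmax.1 with h | h | h
      · exfalso; rw [h] at hc1; linarith
      · rw [hScard] at h; exact h
      · rw [hSccard] at h; exact h
    rw [hmu, hlam]; ring
end

section
/- For the path P_n on n ≥ 2 vertices with eigenvalues λⱼ = 2cos(jπ/(n+1)) for 1 ≤ j ≤ n, the eigenvalue λⱼ is non-main if and only if j is even. -/
open Matrix Finset Polynomial

variable {V : Type*} [Fintype V] [DecidableEq V]

/-- padded vector -/
noncomputable def pv (n : ℕ) (y : Fin n → ℝ) (m : ℕ) : ℝ := if h : m < n then y ⟨m, h⟩ else 0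

lemma sum_ite_pv {n : ℕ} (y : Fin n → ℝ) (m : ℕ) :
    (∑ k : Fin n, if m = (k : ℕ) then y k else 0) = pv n y m := by
  by_cases h : m < n
  · rw [Finset.sum_eq_single (⟨m, h⟩ : Fin n)]
    · simp [pv, h]
    · intro b _ hb
      apply if_neg
      intro hmb
      exact hb (Fin.ext hmb.symm)
    · intro hmem; exact absurd (Finset.mem_univ _) hmem
  · rw [Finset.sum_eq_zero, pv, dif_neg h]
    intro k _
    apply if_neg
    intro hmk
    exact h (hmk ▸ k.isLt)

lemma mulVec_path {n : ℕ} [inst : DecidableRel (SimpleGraph.pathGraph n).Adj]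
    (y : Fin n → ℝ) (i : Fin n) :
    ((SimpleGraph.pathGraph n).adjMatrix ℝ *ᵥ y) i
      = pv n y ((i : ℕ) + 1) + (if (i : ℕ) = 0 then 0 else pv n y ((i : ℕ) - 1)) := by
  have h0 : ((SimpleGraph.pathGraph n).adjMatrix ℝ *ᵥ y) i
      = ∑ k : Fin n, (if ((i:ℕ)+1 = (k:ℕ) ∨ (k:ℕ)+1 = (i:ℕ)) then y k else 0) := by
    simp [Matrix.mulVec, dotProduct, SimpleGraph.pathGraph_adj, ite_mul]
  rw [h0]
  have hsplit : ∀ k : Fin n, (if ((i:ℕ)+1 = (k:ℕ) ∨ (k:ℕ)+1 = (i:ℕ)) then y k else 0)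
      = (if (i:ℕ)+1 = (k:ℕ) then y k else 0) + (if (k:ℕ)+1 = (i:ℕ) then y k else 0) := by
    intro k
    by_cases h1 : (i:ℕ)+1 = (k:ℕ) <;> by_cases h2 : (k:ℕ)+1 = (i:ℕ) <;>
      simp [h1, h2] <;> omega
  rw [Finset.sum_congr rfl (fun k _ => hsplit k), Finset.sum_add_distrib, sum_ite_pv]
  congr 1
  rcases Nat.eq_zero_or_eq_succ_pred (i : ℕ) with h | h
  · rw [h, if_pos rfl, Finset.sum_eq_zero]
    intro k _
    exact if_neg (by omega)
  · rw [h]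
    simp only [Nat.succ_ne_zero, if_false, Nat.succ_sub_one]
    rw [← sum_ite_pv]
    apply Finset.sum_congr rfl
    intro k _
    congr 1
    simp only [eq_iff_iff]
    omega

lemma eig_rec {n : ℕ} [inst : DecidableRel (SimpleGraph.pathGraph n).Adj] {μ : ℝ}
    {y : Fin n → ℝ} (h : (SimpleGraph.pathGraph n).adjMatrix ℝ *ᵥ y = μ • y)
    (m : ℕ) (hm : m < n) :
    pv n y (m + 1) + (if m = 0 then 0 else pv n y (m - 1)) = μ * y ⟨m, hm⟩ := by
  have := congrFun h ⟨m, hm⟩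
  rw [mulVec_path] at this
  simpa using this

lemma eig_unique {n : ℕ} (hn : 2 ≤ n) [inst : DecidableRel (SimpleGraph.pathGraph n).Adj]
    {μ : ℝ} {x y : Fin n → ℝ}
    (hx : (SimpleGraph.pathGraph n).adjMatrix ℝ *ᵥ x = μ • x)
    (hy : (SimpleGraph.pathGraph n).adjMatrix ℝ *ᵥ y = μ • y)
    (hx0 : x ⟨0, by omega⟩ ≠ 0) :
    ∀ i : Fin n, y i = (y ⟨0, by omega⟩ / x ⟨0, by omega⟩) * x i := by
  set c := y ⟨0, by omega⟩ / x ⟨0, by omega⟩ with hc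
  have key : ∀ m : ℕ, ∀ h : m < n, y ⟨m, h⟩ = c * x ⟨m, h⟩ := by
    intro m
    induction m using Nat.strong_induction_on with
    | _ m ih =>
      match m with
      | 0 =>
        intro h
        rw [hc, div_mul_cancel₀ _ hx0]
      | 1 =>
        intro h
        have h0 : (0:ℕ) < n := by omega
        have hry := eig_rec hy 0 h0
        have hrx := eig_rec hx 0 h0
        simp only [pv] at hry hrx
        rw [dif_pos h] at hry hrx
        norm_num at hry hrx
        rw [hry, hrx, ih 0 (by omega) h0]
        ring
      | (m+2) =>
        intro h
        have h1 : m + 1 < n := by omega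
        have hry := eig_rec hy (m+1) h1
        have hrx := eig_rec hx (m+1) h1
        simp only [pv, Nat.add_sub_cancel, if_neg (Nat.succ_ne_zero m)] at hry hrx
        rw [dif_pos (show m+1+1 < n from h), dif_pos (show m < n by omega)] at hry hrx
        rw [show (⟨m+1+1, h⟩ : Fin n) = ⟨m+2, h⟩ from rfl] at hry hrx
        have e1 : y ⟨m+2, h⟩ = μ * y ⟨m+1, h1⟩ - y ⟨m, by omega⟩ := by linarith
        have e2 : x ⟨m+2, h⟩ = μ * x ⟨m+1, h1⟩ - x ⟨m, by omega⟩ := by linarith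
        rw [e1, e2, ih (m+1) (by omega) h1, ih m (by omega) (by omega)]
        ring
  intro i
  have := key i i.isLt
  simpa using this

lemma sin_rec (a t : ℝ) : Real.sin (a + t) + Real.sin (a - t) = 2 * Real.cos t * Real.sin a := by
  rw [Real.sin_add, Real.sin_sub]; ring

/-- the candidate eigenvector -/
noncomputable def sv (n : ℕ) (θ : ℝ) : Fin n → ℝ := fun i => Real.sin (((i : ℕ) + 1) * θ)

lemma pv_sv (n : ℕ) (θ : ℝ) (hs : Real.sin (((n:ℝ) + 1) * θ) = 0)
    (m : ℕ) (hm : m ≤ n) : pv n (sv n θ) m = Real.sin (((m:ℝ) + 1) * θ) := by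
  by_cases h : m < n
  · simp [pv, h, sv]
  · have hmn : m = n := by omega
    subst hmn
    rw [pv, dif_neg h, hs]

lemma sv_eig (n : ℕ) (θ : ℝ) [inst : DecidableRel (SimpleGraph.pathGraph n).Adj]
    (hs : Real.sin (((n:ℝ) + 1) * θ) = 0) :
    (SimpleGraph.pathGraph n).adjMatrix ℝ *ᵥ sv n θ = (2 * Real.cos θ) • sv n θ := by
  funext i
  rw [mulVec_path, Pi.smul_apply, smul_eq_mul]
  rcases hi : (i : ℕ) with _ | m
  · rw [if_pos rfl, add_zero, pv_sv n θ hs (0+1) (by omega)]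
    simp only [sv, hi]
    push_cast
    rw [show ((1:ℝ)+1) * θ = 2 * θ by ring, Real.sin_two_mul]
    ring
  · have hilt := i.isLt
    rw [if_neg (Nat.succ_ne_zero m), pv_sv n θ hs (m+1+1) (by omega),
      Nat.succ_sub_one, pv_sv n θ hs m (by omega)]
    simp only [sv, hi]
    push_cast
    rw [show ((m:ℝ)+1+1+1) * θ = ((m:ℝ)+1+1) * θ + θ by ring,
      show ((m:ℝ)+1) * θ = ((m:ℝ)+1+1) * θ - θ by ring, sin_rec]

lemma sin_sum_tele (θ : ℝ) (n : ℕ) :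
    2 * Real.sin (θ/2) * (∑ m ∈ Finset.range n, Real.sin (((m:ℝ)+1) * θ))
      = Real.cos (θ/2) - Real.cos ((n:ℝ)*θ + θ/2) := by
  rw [Finset.mul_sum]
  have h : ∀ m ∈ Finset.range n, 2 * Real.sin (θ/2) * Real.sin (((m:ℝ)+1) * θ)
      = (fun k : ℕ => Real.cos ((k:ℝ)*θ + θ/2)) m
        - (fun k : ℕ => Real.cos ((k:ℝ)*θ + θ/2)) (m+1) := by
    intro m _
    simp only
    push_cast
    rw [show (m:ℝ)*θ + θ/2 = ((m:ℝ)+1)*θ - θ/2 by ring,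
      show ((m:ℝ)+1)*θ + θ/2 = ((m:ℝ)+1)*θ + θ/2 from rfl, Real.cos_sub, Real.cos_add]
    ring
  rw [Finset.sum_congr rfl h, Finset.sum_range_sub' (fun k : ℕ => Real.cos ((k:ℝ)*θ + θ/2))]
  norm_num


theorem path_nonmain_iff_even {n : ℕ} (hn : 2 ≤ n)
    [DecidableRel (SimpleGraph.pathGraph n).Adj]
    (j : ℕ) (hj1 : 1 ≤ j) (hjn : j ≤ n) :
    (SimpleGraph.pathGraph n).IsNonMainEigenvalue
        (2 * Real.cos (j * Real.pi / (n + 1))) ↔ Even j := by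
  have hπ := Real.pi_pos
  set θ : ℝ := (j:ℝ) * Real.pi / ((n:ℝ) + 1) with hθ
  have hn1 : (0:ℝ) < (n:ℝ) + 1 := by positivity
  have hj0 : (0:ℝ) < (j:ℝ) := by exact_mod_cast hj1
  have hθ0 : 0 < θ := by rw [hθ]; positivity
  have hjlt : (j:ℝ) < (n:ℝ) + 1 := by exact_mod_cast Nat.lt_succ_of_le hjn
  have hθπ : θ < Real.pi := by
    rw [hθ, div_lt_iff₀ hn1]; nlinarith
  have hkey : ((n:ℝ) + 1) * θ = (j:ℝ) * Real.pi := by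
    rw [hθ]; field_simp
  have hs : Real.sin (((n:ℝ)+1) * θ) = 0 := by rw [hkey]; exact Real.sin_nat_mul_pi j
  have heig := sv_eig n θ hs
  have hx0ne : sv n θ ⟨0, by omega⟩ ≠ 0 := by
    have h1 : sv n θ ⟨0, by omega⟩ = Real.sin θ := by
      simp [sv]
    rw [h1]
    exact ne_of_gt (Real.sin_pos_of_pos_of_lt_pi hθ0 hθπ)
  have hxne : sv n θ ≠ 0 := fun h0 => hx0ne (by rw [h0]; rfl)
  have hsum : ∑ v, sv n θ v = ∑ m ∈ Finset.range n, Real.sin (((m:ℝ)+1) * θ) := by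
    simp only [sv]
    rw [Fin.sum_univ_eq_sum_range (fun m : ℕ => Real.sin (((m:ℕ)+1) * θ))]
  have htele := sin_sum_tele θ n
  have hcos : Real.cos ((n:ℝ)*θ + θ/2) = (-1)^j * Real.cos (θ/2) := by
    rw [show (n:ℝ)*θ + θ/2 = ((n:ℝ)+1)*θ - θ/2 by ring, hkey]
    exact Real.cos_nat_mul_pi_sub (θ/2) j
  have hsin2 : 0 < Real.sin (θ/2) := Real.sin_pos_of_pos_of_lt_pi (by linarith) (by linarith)
  have hcos2 : 0 < Real.cos (θ/2) :=
    Real.cos_pos_of_mem_Ioo ⟨by linarith, by linarith⟩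
  constructor
  · intro hnm
    by_contra hodd
    rw [Nat.not_even_iff_odd] at hodd
    apply hnm.2
    refine ⟨sv n θ, hxne, heig, ?_⟩
    rw [hsum]
    intro hS
    rw [hS, mul_zero, hcos, hodd.neg_one_pow] at htele
    nlinarith
  · intro heven
    refine ⟨⟨sv n θ, hxne, heig⟩, ?_⟩
    rintro ⟨y, hy0, hyeig, hysum⟩
    have huniq := eig_unique hn heig hyeig hx0ne
    apply hysum
    have hyc : ∑ v, y v
        = (y ⟨0, by omega⟩ / sv n θ ⟨0, by omega⟩) * ∑ v, sv n θ v := by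
      rw [Finset.mul_sum]; exact Finset.sum_congr rfl fun v _ => huniq v
    have hz : 2 * Real.sin (θ/2) * (∑ m ∈ Finset.range n, Real.sin (((m:ℝ)+1) * θ)) = 0 := by
      rw [htele, hcos, heven.neg_one_pow, one_mul]; ring
    have h2 : (2 * Real.sin (θ/2)) ≠ 0 := by positivity
    have hS0 : (∑ m ∈ Finset.range n, Real.sin (((m:ℝ)+1) * θ)) = 0 :=
      (mul_eq_zero.mp hz).resolve_left h2
    rw [hyc, hsum, hS0, mul_zero]
end
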